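/- Let Ω = {0,1}^∞ and let P be a σ-additive probability on the Borel σ-algebra whose restriction P_F to the cylinder algebra F assigns positive probability to every cylinder. Then the set of finitely additive probabilities Q on (Ω, Σ) such that Q agrees with P on every cylinder, Q satisfies the Blackwell–Dubins property, and Q is not σ-additive, has cardinality at least the continuum. -/

import Mathlib

open Filter Topology


/-- A path in `{0,1}^∞`. -/
abbrev BinSeq := ℕ → Bool

/-- The cylinder of length `t` with base `ω`: all sequences agreeing with `ω`
in the first `t` coordinates. -/
def cyl {X : Type*} (ω : ℕ → X) (t : ℕ) : Set (ℕ → X) := {ω' | ∀ i < t, ω' i = ω i}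

/-- An algebra of subsets of `Ω`. -/
structure SetAlgebra (Ω : Type*) where
  sets : Set (Set Ω)
  univ_mem : Set.univ ∈ sets
  compl_mem : ∀ S ∈ sets, Sᶜ ∈ sets
  union_mem : ∀ S ∈ sets, ∀ T ∈ sets, S ∪ T ∈ sets

/-- The algebra is a σ-algebra: closed under countable unions. -/
def SetAlgebra.IsSigmaAlgebra {Ω : Type*} (A : SetAlgebra Ω) : Prop :=
  ∀ f : ℕ → Set Ω, (∀ n, f n ∈ A.sets) → (⋃ n, f n) ∈ A.sets

/-- The power-set algebra. -/
def SetAlgebra.top (Ω : Type*) : SetAlgebra Ω :=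
  ⟨Set.univ, trivial, fun _ _ => trivial, fun _ _ _ _ => trivial⟩

/-- A finitely additive probability on `(Ω, A)`.  The function `m` is defined on all
subsets for convenience; only its values on `A.sets` are constrained. -/
structure FA {Ω : Type*} (A : SetAlgebra Ω) where
  m : Set Ω → ℝ
  nonneg : ∀ S ∈ A.sets, 0 ≤ m S
  total : m Set.univ = 1
  add : ∀ S ∈ A.sets, ∀ T ∈ A.sets, Disjoint S T → m (S ∪ T) = m S + m T

/-- Conditional probability `P(E | C) = P(E ∩ C) / P(C)`. -/
noncomputable def FA.cond {Ω : Type*} {A : SetAlgebra Ω} (P : FA A) (E C : Set Ω) : ℝ :=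
  P.m (E ∩ C) / P.m C

/-- `Q` is absolutely continuous w.r.t. `P` (written `Q ≪ P` in the paper):
for every sequence of events, `P(Eₙ) → 0` implies `Q(Eₙ) → 0`. -/
def AbsCont {Ω : Type*} {A : SetAlgebra Ω} (P Q : FA A) : Prop :=
  ∀ E : ℕ → Set Ω, (∀ n, E n ∈ A.sets) →
    Tendsto (fun n => P.m (E n)) atTop (𝓝 0) → Tendsto (fun n => Q.m (E n)) atTop (𝓝 0)

/-- `P` merges with `Q`: for every `ε > 0`, the `Q`-probability of the set of paths where
some event has conditional probabilities (given the first `t` coordinates) differing by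
more than `ε` tends to `0` as `t → ∞`.  (`sup_E |P(E|ωᵗ) - Q(E|ωᵗ)| > ε` is expressed
equivalently as `∃ E`.) -/
def Merges {A : SetAlgebra BinSeq} (P Q : FA A) : Prop :=
  ∀ ε > 0, Tendsto
    (fun t => Q.m {ω | ∃ E ∈ A.sets, ε < |P.cond E (cyl ω t) - Q.cond E (cyl ω t)|})
    atTop (𝓝 0)

/-- Membership in the algebra `F` generated by the cylinders of `{0,1}^∞`:
the finite unions of cylinders (the empty union giving `∅`). -/
def InCylAlg (S : Set BinSeq) : Prop :=
  ∃ (n : ℕ) (f : Fin n → BinSeq × ℕ), S = ⋃ i, cyl (f i).1 (f i).2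

/-- `Q` agrees with `P` on the algebra generated by cylinders, i.e. `Q` is an
extension of `P_F` from `F` to `Σ`. -/
def ExtAgree {A : SetAlgebra BinSeq} (P Q : FA A) : Prop :=
  ∀ S, InCylAlg S → Q.m S = P.m S

/-- `P` is an extreme point of the set `E(P_F, F, Σ)` of extensions of its restriction
to the cylinder algebra: any representation of `P` as a nontrivial convex combination
of two extensions forces the two extensions to coincide (with `P`). -/
def ExtremePoint {A : SetAlgebra BinSeq} (P : FA A) : Prop :=
  ∀ Q R : FA A, ExtAgree P Q → ExtAgree P R →
    ∀ α : ℝ, 0 < α → α < 1 →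
      (∀ S ∈ A.sets, P.m S = α * Q.m S + (1 - α) * R.m S) →
      ∀ S ∈ A.sets, Q.m S = R.m S

/-- `P` is strongly nonatomic (Savagean): every event can be split in any proportion. -/
def StronglyNonatomic {Ω : Type*} {A : SetAlgebra Ω} (P : FA A) : Prop :=
  ∀ E ∈ A.sets, ∀ α : ℝ, 0 ≤ α → α ≤ 1 → ∃ F ∈ A.sets, F ⊆ E ∧ P.m F = α * P.m E

/-- The Blackwell–Dubins property: `P` merges with every `Q ≪ P`. -/
def BDProp {A : SetAlgebra BinSeq} (P : FA A) : Prop :=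
  ∀ Q : FA A, AbsCont P Q → Merges P Q

/-- `P` is countably additive (σ-additive). -/
def CountablyAdditive {Ω : Type*} {A : SetAlgebra Ω} (P : FA A) : Prop :=
  ∀ E : ℕ → Set Ω, (∀ n, E n ∈ A.sets) → (∀ n m, n ≠ m → Disjoint (E n) (E m)) →
    Tendsto (fun N => ∑ n ∈ Finset.range N, P.m (E n)) atTop (𝓝 (P.m (⋃ n, E n)))
open Classical Set MeasureTheory

noncomputable section
namespace BD

/-- prefixes of length `t` -/
abbrev V (t : ℕ) := Fin t → Bool

def pre (t : ℕ) (ω : BinSeq) : V t := fun i => ω i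

/-- cylinder with base a single prefix -/
def cylV {t : ℕ} (v : V t) : Set BinSeq := pre t ⁻¹' {v}

/-- finite union of length-`t` cylinders -/
def cylSet {t : ℕ} (W : Finset (V t)) : Set BinSeq := pre t ⁻¹' ↑W

lemma mem_cylV {t} {v : V t} {ω} : ω ∈ cylV v ↔ pre t ω = v := Iff.rfl
lemma mem_cylSet {t} {W : Finset (V t)} {ω} : ω ∈ cylSet W ↔ pre t ω ∈ W := Iff.rfl

def vext {t : ℕ} (v : V t) : BinSeq := fun n => if h : n < t then v ⟨n, h⟩ else false

lemma pre_vext {t} (v : V t) : pre t (vext v) = v := by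
  funext i; simp [pre, vext, i.isLt]

lemma cyl_eq_cylV (ω : BinSeq) (t : ℕ) : cyl ω t = cylV (pre t ω) := by
  ext ω'; constructor
  · intro h; funext i; exact h i i.isLt
  · intro h i hi; exact congrFun h ⟨i, hi⟩

lemma cylV_eq_cyl {t} (v : V t) : cylV v = cyl (vext v) t := by
  rw [cyl_eq_cylV, pre_vext]

lemma cylV_nonempty {t} (v : V t) : (cylV v).Nonempty := ⟨vext v, pre_vext v⟩

lemma measurableSet_cylV {t} (v : V t) : MeasurableSet (cylV v) := by
  have h : cylV v = ⋂ i : Fin t, (fun ω : BinSeq => ω i) ⁻¹' {v i} := by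
    ext ω
    simp only [cylV, Set.mem_preimage, Set.mem_singleton_iff, Set.mem_iInter, funext_iff]
    rfl
  rw [h]
  exact MeasurableSet.iInter fun i => (measurable_pi_apply (i : ℕ)) (measurableSet_singleton _)

lemma cylSet_eq_biUnion {t} (W : Finset (V t)) : cylSet W = ⋃ v ∈ W, cylV v := by
  ext ω; simp [mem_cylSet, cylV]

lemma measurableSet_cylSet {t} (W : Finset (V t)) : MeasurableSet (cylSet W) := by
  rw [cylSet_eq_biUnion]
  exact MeasurableSet.biUnion W.countable_toSet fun v _ => measurableSet_cylV v

lemma measurableSet_singleton_binseq (x : BinSeq) : MeasurableSet ({x} : Set BinSeq) := by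
  have h : ({x} : Set BinSeq) = ⋂ n : ℕ, (fun ω : BinSeq => ω n) ⁻¹' {x n} := by
    ext ω
    simp only [Set.mem_singleton_iff, Set.mem_iInter, Set.mem_preimage, funext_iff]
  rw [h]
  exact MeasurableSet.iInter fun n => (measurable_pi_apply n) (measurableSet_singleton _)

def proj {t s : ℕ} (h : t ≤ s) : V s → V t := fun w i => w (Fin.castLE h i)

lemma pre_proj {t s} (h : t ≤ s) (ω : BinSeq) : proj h (pre s ω) = pre t ω := rfl

lemma proj_comp {t s u} (h1 : t ≤ s) (h2 : s ≤ u) (w : V u) :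
    proj h1 (proj h2 w) = proj (h1.trans h2) w := rfl

lemma cylV_subset_proj {t s} (h : t ≤ s) (w : V s) : cylV w ⊆ cylV (proj h w) := by
  intro ω hω
  rw [mem_cylV] at hω ⊢
  rw [← pre_proj h, hω]

lemma cylV_eq_fiber {t s} (h : t ≤ s) (v : V t) :
    cylV v = cylSet (Finset.univ.filter fun w : V s => proj h w = v) := by
  ext ω
  simp [mem_cylV, mem_cylSet, ← pre_proj h]

lemma cylSet_lift {t s} (h : t ≤ s) (W : Finset (V t)) :
    cylSet W = cylSet (Finset.univ.filter fun w : V s => proj h w ∈ W) := by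
  ext ω
  simp [mem_cylSet, ← pre_proj h]

lemma cylSet_compl {t} (W : Finset (V t)) : (cylSet W)ᶜ = cylSet Wᶜ := by
  ext ω; simp [mem_cylSet]

lemma cylSet_union {t} (W W' : Finset (V t)) : cylSet W ∪ cylSet W' = cylSet (W ∪ W') := by
  ext ω; simp [mem_cylSet]

lemma cylSet_inter {t} (W W' : Finset (V t)) : cylSet W ∩ cylSet W' = cylSet (W ∩ W') := by
  ext ω; simp [mem_cylSet]

lemma cylSet_empty {t} : cylSet (∅ : Finset (V t)) = ∅ := by
  ext ω; simp [mem_cylSet]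

lemma cylSet_univ {t} : cylSet (Finset.univ : Finset (V t)) = Set.univ := by
  ext ω; simp [mem_cylSet]

lemma disjoint_cylV {t} {v w : V t} (h : v ≠ w) : Disjoint (cylV v) (cylV w) := by
  rw [Set.disjoint_left]
  intro ω h1 h2
  rw [mem_cylV] at h1 h2
  exact h (h1 ▸ h2)

lemma disjoint_cylV_cylSet {t} {v : V t} {W : Finset (V t)} (h : v ∉ W) :
    Disjoint (cylV v) (cylSet W) := by
  rw [Set.disjoint_left]
  intro ω h1 h2
  rw [mem_cylV] at h1
  rw [mem_cylSet, h1] at h2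
  exact h h2

/-- the algebra generated by cylinders: finite unions of same-length cylinders -/
def CAlg (S : Set BinSeq) : Prop := ∃ (t : ℕ) (W : Finset (V t)), S = cylSet W

lemma CAlg.measurableSet {S} (h : CAlg S) : MeasurableSet S := by
  obtain ⟨t, W, rfl⟩ := h; exact measurableSet_cylSet W

lemma calg_cylV {t} (v : V t) : CAlg (cylV v) := ⟨t, {v}, by ext; simp [mem_cylV, mem_cylSet]⟩

lemma CAlg.empty : CAlg (∅ : Set BinSeq) := ⟨0, ∅, cylSet_empty.symm⟩

lemma CAlg.univ : CAlg (Set.univ : Set BinSeq) := ⟨0, Finset.univ, cylSet_univ.symm⟩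

lemma CAlg.two_common {S T} (hS : CAlg S) (hT : CAlg T) :
    ∃ (t : ℕ) (W W' : Finset (V t)), S = cylSet W ∧ T = cylSet W' := by
  obtain ⟨a, Wa, rfl⟩ := hS; obtain ⟨b, Wb, rfl⟩ := hT
  exact ⟨max a b, _, _, cylSet_lift (le_max_left a b) Wa, cylSet_lift (le_max_right a b) Wb⟩

lemma CAlg.compl {S} (hS : CAlg S) : CAlg Sᶜ := by
  obtain ⟨t, W, rfl⟩ := hS; exact ⟨t, Wᶜ, cylSet_compl W⟩

lemma CAlg.union {S T} (hS : CAlg S) (hT : CAlg T) : CAlg (S ∪ T) := by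
  obtain ⟨t, W, W', rfl, rfl⟩ := hS.two_common hT; exact ⟨t, W ∪ W', cylSet_union W W'⟩

lemma CAlg.inter {S T} (hS : CAlg S) (hT : CAlg T) : CAlg (S ∩ T) := by
  obtain ⟨t, W, W', rfl, rfl⟩ := hS.two_common hT; exact ⟨t, W ∩ W', cylSet_inter W W'⟩

lemma CAlg.diff {S T} (hS : CAlg S) (hT : CAlg T) : CAlg (S \ T) := hS.inter hT.compl

lemma CAlg.symmDiff {S T} (hS : CAlg S) (hT : CAlg T) : CAlg (symmDiff S T) := by
  rw [Set.symmDiff_def]; exact (hS.diff hT).union (hT.diff hS)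

/-- a nonempty element of the cylinder algebra contains a cylinder -/
lemma CAlg.exists_cylV_subset {S} (hS : CAlg S) (hne : S.Nonempty) :
    ∃ (t : ℕ) (v : V t), cylV v ⊆ S := by
  obtain ⟨t, W, rfl⟩ := hS
  obtain ⟨ω, hω⟩ := hne
  refine ⟨t, pre t ω, fun ω' hω' => ?_⟩
  rw [mem_cylV] at hω'
  rw [mem_cylSet] at hω ⊢
  rw [hω']; exact hω

end BD
end
namespace BD
open Classical Set MeasureTheory

/-- A finitely additive probability on an algebra of sets (working structure). -/
structure Alg where
  c : Set (Set BinSeq)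
  m : Set BinSeq → ℝ
  huniv : Set.univ ∈ c
  hcompl : ∀ S ∈ c, Sᶜ ∈ c
  hunion : ∀ S ∈ c, ∀ T ∈ c, S ∪ T ∈ c
  hnonneg : ∀ S ∈ c, 0 ≤ m S
  htotal : m Set.univ = 1
  hadd : ∀ S ∈ c, ∀ T ∈ c, Disjoint S T → m (S ∪ T) = m S + m T

namespace Alg

variable (a : Alg)

lemma hempty : ∅ ∈ a.c := by
  have := a.hcompl _ a.huniv; simpa using this

lemma hinter {S T} (hS : S ∈ a.c) (hT : T ∈ a.c) : S ∩ T ∈ a.c := by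
  have h : S ∩ T = (Sᶜ ∪ Tᶜ)ᶜ := by rw [Set.compl_union, compl_compl, compl_compl]
  rw [h]
  exact a.hcompl _ (a.hunion _ (a.hcompl _ hS) _ (a.hcompl _ hT))

lemma hdiff {S T} (hS : S ∈ a.c) (hT : T ∈ a.c) : S \ T ∈ a.c :=
  a.hinter hS (a.hcompl _ hT)

lemma hsymmDiff {S T} (hS : S ∈ a.c) (hT : T ∈ a.c) : symmDiff S T ∈ a.c := by
  rw [Set.symmDiff_def]
  exact a.hunion _ (a.hdiff hS hT) _ (a.hdiff hT hS)

lemma m_empty : a.m ∅ = 0 := by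
  have h := a.hadd ∅ a.hempty ∅ a.hempty (by simp)
  simp only [Set.union_empty] at h
  linarith

lemma m_mono {S T} (hS : S ∈ a.c) (hT : T ∈ a.c) (h : S ⊆ T) : a.m S ≤ a.m T := by
  have hdT : T = S ∪ (T \ S) := by rw [Set.union_diff_cancel h]
  have hadd := a.hadd S hS (T \ S) (a.hdiff hT hS) Set.disjoint_sdiff_right
  rw [← hdT] at hadd
  have := a.hnonneg _ (a.hdiff hT hS)
  linarith

lemma m_le_one {S} (hS : S ∈ a.c) : a.m S ≤ 1 := by
  have := a.m_mono hS a.huniv (Set.subset_univ S)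
  rw [a.htotal] at this; exact this

lemma m_diff {S T} (hS : S ∈ a.c) (hT : T ∈ a.c) (h : T ⊆ S) :
    a.m (S \ T) = a.m S - a.m T := by
  have hd : S = T ∪ (S \ T) := by rw [Set.union_diff_cancel h]
  have hadd := a.hadd T hT (S \ T) (a.hdiff hS hT) Set.disjoint_sdiff_right
  rw [← hd] at hadd
  linarith

lemma m_union_le {S T} (hS : S ∈ a.c) (hT : T ∈ a.c) : a.m (S ∪ T) ≤ a.m S + a.m T := by
  have h1 : S ∪ T = S ∪ (T \ S) := by rw [Set.union_diff_self]
  have hadd := a.hadd S hS (T \ S) (a.hdiff hT hS) Set.disjoint_sdiff_right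
  rw [← h1] at hadd
  have := a.m_mono (a.hdiff hT hS) hT (Set.diff_subset)
  linarith

lemma m_subset_add {S T U} (hS : S ∈ a.c) (hT : T ∈ a.c) (hU : U ∈ a.c)
    (h : S ⊆ T ∪ U) : a.m S ≤ a.m T + a.m U := by
  have := a.m_mono hS (a.hunion _ hT _ hU) h
  have := a.m_union_le hT hU
  linarith

lemma abs_m_sub_le {S T} (hS : S ∈ a.c) (hT : T ∈ a.c) :
    |a.m S - a.m T| ≤ a.m (symmDiff S T) := by
  have h1 : S ⊆ T ∪ symmDiff S T := by
    intro x hx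
    by_cases hxT : x ∈ T
    · exact Or.inl hxT
    · exact Or.inr (by rw [Set.mem_symmDiff]; exact Or.inl ⟨hx, hxT⟩)
  have h2 : T ⊆ S ∪ symmDiff S T := by
    intro x hx
    by_cases hxS : x ∈ S
    · exact Or.inl hxS
    · exact Or.inr (by rw [Set.mem_symmDiff]; exact Or.inr ⟨hx, hxS⟩)
  have b1 := a.m_subset_add hS hT (a.hsymmDiff hS hT) h1
  have b2 := a.m_subset_add hT hS (a.hsymmDiff hS hT) h2
  rw [abs_le]; constructor <;> linarith

lemma m_biUnion {ι : Type*} [DecidableEq ι] (s : Finset ι) (f : ι → Set BinSeq)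
    (hf : ∀ i ∈ s, f i ∈ a.c)
    (hdisj : ∀ i ∈ s, ∀ j ∈ s, i ≠ j → Disjoint (f i) (f j)) :
    (⋃ i ∈ s, f i) ∈ a.c ∧ a.m (⋃ i ∈ s, f i) = ∑ i ∈ s, a.m (f i) := by
  induction s using Finset.induction with
  | empty => simpa using ⟨a.hempty, a.m_empty⟩
  | @insert i s hi ih =>
    have hf' : ∀ j ∈ s, f j ∈ a.c := fun j hj => hf j (Finset.mem_insert_of_mem hj)
    have hd' : ∀ x ∈ s, ∀ j ∈ s, x ≠ j → Disjoint (f x) (f j) := fun x hx j hj =>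
      hdisj x (Finset.mem_insert_of_mem hx) j (Finset.mem_insert_of_mem hj)
    obtain ⟨hmem, hsum⟩ := ih hf' hd'
    have heq : (⋃ j ∈ insert i s, f j) = f i ∪ ⋃ j ∈ s, f j := by
      simp [Finset.set_biUnion_insert]
    have hfi : f i ∈ a.c := hf i (Finset.mem_insert_self i s)
    have hdisji : Disjoint (f i) (⋃ j ∈ s, f j) := by
      rw [Set.disjoint_iUnion_right]
      intro j
      rw [Set.disjoint_iUnion_right]
      intro hj
      exact hdisj i (Finset.mem_insert_self i s) j (Finset.mem_insert_of_mem hj)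
        (fun h => hi (h ▸ hj))
    constructor
    · rw [heq]; exact a.hunion _ hfi _ hmem
    · rw [heq, a.hadd _ hfi _ hmem hdisji, hsum, Finset.sum_insert hi]

/-- summing over a `cylSet` when all measurable sets belong to the algebra. -/
lemma m_cylSet_sum (hms : ∀ S, MeasurableSet S → S ∈ a.c) {t} (W : Finset (V t)) :
    a.m (cylSet W) = ∑ v ∈ W, a.m (cylV v) := by
  have h := a.m_biUnion W (fun v => cylV v)
    (fun v _ => hms _ (measurableSet_cylV v))
    (fun v _ w _ hvw => disjoint_cylV hvw)
  rw [cylSet_eq_biUnion]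
  exact h.2

end Alg

/-- The `Alg` bundle of a finitely additive probability `Q'` on `A`. -/
def faAlg {A : SetAlgebra BinSeq} (Q : FA A) : Alg :=
  ⟨A.sets, Q.m, A.univ_mem, A.compl_mem, A.union_mem, Q.nonneg, Q.total, Q.add⟩

section Pside
variable (P : Measure BinSeq) [IsProbabilityMeasure P]

lemma P_cylSet_sum {t} (W : Finset (V t)) :
    (P (cylSet W)).toReal = ∑ v ∈ W, (P (cylV v)).toReal := by
  induction W using Finset.induction with
  | empty => simp [cylSet_empty]
  | @insert v W hv ih =>
    have heq : cylSet (insert v W) = cylV v ∪ cylSet W := by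
      ext ω; simp [mem_cylSet, mem_cylV, cylV]
    rw [heq, measure_union (disjoint_cylV_cylSet hv) (measurableSet_cylSet W),
      ENNReal.toReal_add (measure_ne_top P _) (measure_ne_top P _), ih, Finset.sum_insert hv]

lemma P_total : (P (cylSet (Finset.univ : Finset (V t)))).toReal = 1 := by
  rw [cylSet_univ]; simp

end Pside

end BD
namespace BD
open Classical Set MeasureTheory

/-- A stage in the transfinite construction: a finitely additive probability on an
algebra of sets containing the cylinder algebra and `D`, giving `D` probability 1,
agreeing with `P` on the cylinder algebra, and with the density property. -/
structure Piece (P : Measure BinSeq) (D : Set BinSeq) extends Alg where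
  hcalg : ∀ F, CAlg F → F ∈ c ∧ m F = (P F).toReal
  hD : D ∈ c ∧ m D = 1
  hdens : ∀ S ∈ c, ∀ ε > 0, ∃ F, CAlg F ∧ m (symmDiff S F) < ε

def Piece.le {P : Measure BinSeq} {D : Set BinSeq} (p q : Piece P D) : Prop :=
  p.c ⊆ q.c ∧ ∀ S ∈ p.c, q.m S = p.m S

lemma Piece.le_trans {P : Measure BinSeq} {D : Set BinSeq} {p q r : Piece P D}
    (h1 : p.le q) (h2 : q.le r) : p.le r :=
  ⟨h1.1.trans h2.1, fun S hS => by rw [h2.2 S (h1.1 hS), h1.2 S hS]⟩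

section Base

variable {P : Measure BinSeq} [IsProbabilityMeasure P] {D : Set BinSeq}

/-- density of `D`: it meets every cylinder -/
def DenseIn (D : Set BinSeq) : Prop := ∀ (t : ℕ) (v : V t), (cylV v ∩ D).Nonempty

lemma calg_empty_of_inter_D (hD : DenseIn D) {G : Set BinSeq} (hG : CAlg G)
    (h : G ∩ D = ∅) : G = ∅ := by
  by_contra hne
  obtain ⟨t, v, hv⟩ := hG.exists_cylV_subset (Set.nonempty_iff_ne_empty.2 hne)
  obtain ⟨x, hx1, hx2⟩ := hD t v
  have : x ∈ G ∩ D := ⟨hv hx1, hx2⟩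
  rw [h] at this
  exact this

lemma calg_inter_D_inj (hD : DenseIn D) {F F' : Set BinSeq} (hF : CAlg F) (hF' : CAlg F')
    (h : F ∩ D = F' ∩ D) : F = F' := by
  have h1 : (F \ F') ∩ D = ∅ := by
    apply Set.eq_empty_of_forall_notMem
    intro x ⟨⟨hxF, hxF'⟩, hxD⟩
    have : x ∈ F' ∩ D := h ▸ (⟨hxF, hxD⟩ : x ∈ F ∩ D)
    exact hxF' this.1
  have h2 : (F' \ F) ∩ D = ∅ := by
    apply Set.eq_empty_of_forall_notMem
    intro x ⟨⟨hxF', hxF⟩, hxD⟩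
    have : x ∈ F ∩ D := h.symm ▸ (⟨hxF', hxD⟩ : x ∈ F' ∩ D)
    exact hxF this.1
  have e1 := calg_empty_of_inter_D hD (hF.diff hF') h1
  have e2 := calg_empty_of_inter_D hD (hF'.diff hF) h2
  apply Set.Subset.antisymm
  · intro x hx
    by_contra hx'
    exact absurd (Set.eq_empty_iff_forall_notMem.1 e1 x ⟨hx, hx'⟩) (fun h => h)
  · intro x hx
    by_contra hx'
    exact absurd (Set.eq_empty_iff_forall_notMem.1 e2 x ⟨hx, hx'⟩) (fun h => h)

/-- carrier of the base piece: the algebra generated by cylinders and `D` -/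
def baseC (D : Set BinSeq) : Set (Set BinSeq) :=
  {S | ∃ F G, CAlg F ∧ CAlg G ∧ S = (F ∩ D) ∪ (G ∩ Dᶜ)}

/-- the base finitely additive probability: mass transported onto `D` -/
noncomputable def baseM (P : Measure BinSeq) (D : Set BinSeq) (S : Set BinSeq) : ℝ :=
  if h : ∃ F, CAlg F ∧ S ∩ D = F ∩ D then (P h.choose).toReal else 0

lemma baseM_eq (hD : DenseIn D) {S F : Set BinSeq} (hF : CAlg F) (h : S ∩ D = F ∩ D) :
    baseM P D S = (P F).toReal := by
  have hex : ∃ F', CAlg F' ∧ S ∩ D = F' ∩ D := ⟨F, hF, h⟩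
  rw [baseM, dif_pos hex]
  have hsp := hex.choose_spec
  have : hex.choose = F := calg_inter_D_inj hD hsp.1 hF (hsp.2.symm.trans h)
  rw [this]

lemma mem_baseC_inter_D {S : Set BinSeq} (h : S ∈ baseC D) :
    ∃ F, CAlg F ∧ S ∩ D = F ∩ D := by
  obtain ⟨F, G, hF, hG, rfl⟩ := h
  refine ⟨F, hF, ?_⟩
  ext x
  simp only [Set.mem_inter_iff, Set.mem_union, Set.mem_compl_iff]
  tauto

/-- the base piece -/
noncomputable def basePiece (P : Measure BinSeq) [IsProbabilityMeasure P]
    (D : Set BinSeq) (hDd : DenseIn D) : Piece P D where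
  c := baseC D
  m := baseM P D
  huniv := ⟨Set.univ, Set.univ, CAlg.univ, CAlg.univ, by simp⟩
  hcompl := by
    rintro S ⟨F, G, hF, hG, rfl⟩
    refine ⟨Fᶜ, Gᶜ, hF.compl, hG.compl, ?_⟩
    ext x
    simp only [Set.mem_compl_iff, Set.mem_union, Set.mem_inter_iff]
    by_cases hx : x ∈ D <;> simp [hx] <;> tauto
  hunion := by
    rintro S ⟨F, G, hF, hG, rfl⟩ T ⟨F', G', hF', hG', rfl⟩
    refine ⟨F ∪ F', G ∪ G', hF.union hF', hG.union hG', ?_⟩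
    ext x
    simp only [Set.mem_union, Set.mem_inter_iff, Set.mem_compl_iff]
    tauto
  hnonneg := by
    intro S _
    rw [baseM]
    split
    · exact ENNReal.toReal_nonneg
    · exact le_refl 0
  htotal := by
    rw [baseM_eq hDd CAlg.univ rfl]
    simp
  hadd := by
    intro S hS T hT hdisj
    obtain ⟨F, hF, hSD⟩ := mem_baseC_inter_D hS
    obtain ⟨F', hF', hTD⟩ := mem_baseC_inter_D hT
    have hFF' : F ∩ F' = ∅ := by
      apply calg_empty_of_inter_D hDd (hF.inter hF')
      have : (F ∩ F') ∩ D = (S ∩ D) ∩ (T ∩ D) := by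
        rw [hSD, hTD]; ext x; simp only [Set.mem_inter_iff]; tauto
      rw [this]
      have := Set.disjoint_iff_inter_eq_empty.1 hdisj
      ext x; simp only [Set.mem_inter_iff, Set.mem_empty_iff_false, iff_false]
      intro ⟨⟨h1, _⟩, ⟨h2, _⟩⟩
      exact Set.eq_empty_iff_forall_notMem.1 this x ⟨h1, h2⟩
    have hUD : (S ∪ T) ∩ D = (F ∪ F') ∩ D := by
      rw [Set.union_inter_distrib_right, Set.union_inter_distrib_right, hSD, hTD]
    rw [baseM_eq hDd (hF.union hF') hUD, baseM_eq hDd hF hSD, baseM_eq hDd hF' hTD]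
    rw [measure_union (Set.disjoint_iff_inter_eq_empty.2 hFF') hF'.measurableSet]
    exact ENNReal.toReal_add (measure_ne_top P _) (measure_ne_top P _)
  hcalg := by
    intro F hF
    constructor
    · exact ⟨F, F, hF, hF, by rw [Set.inter_union_compl]⟩
    · exact baseM_eq hDd hF rfl
  hD := by
    constructor
    · exact ⟨Set.univ, ∅, CAlg.univ, CAlg.empty, by simp⟩
    · show baseM P D D = 1
      rw [baseM_eq hDd CAlg.univ (by simp)]
      simp
  hdens := by
    rintro S ⟨F, G, hF, hG, rfl⟩ ε hε
    refine ⟨F, hF, ?_⟩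
    show baseM P D _ < ε
    have h0 : symmDiff ((F ∩ D) ∪ (G ∩ Dᶜ)) F ∩ D = ∅ := by
      ext x
      simp only [Set.mem_inter_iff, Set.mem_empty_iff_false, iff_false, Set.mem_symmDiff,
        Set.mem_union, Set.mem_compl_iff]
      tauto
    rw [baseM_eq hDd CAlg.empty (by rw [h0]; simp)]
    simpa using hε

end Base
end BD
namespace BD
open Classical Set MeasureTheory

section Chain

variable {P : Measure BinSeq} [IsProbabilityMeasure P] {D : Set BinSeq}

lemma Piece.le_refl (p : Piece P D) : p.le p := ⟨subset_rfl, fun _ _ => rfl⟩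

lemma chain_total {ch : Set (Piece P D)} (hch : IsChain Piece.le ch)
    {p q : Piece P D} (hp : p ∈ ch) (hq : q ∈ ch) : p.le q ∨ q.le p := by
  by_cases h : p = q
  · subst h; exact Or.inl p.le_refl
  · exact hch hp hq h

lemma chain_agree {ch : Set (Piece P D)} (hch : IsChain Piece.le ch)
    {p q : Piece P D} (hp : p ∈ ch) (hq : q ∈ ch) {S : Set BinSeq}
    (hSp : S ∈ p.c) (hSq : S ∈ q.c) : p.m S = q.m S := by
  rcases chain_total hch hp hq with h | h
  · exact (h.2 S hSp).symm
  · exact h.2 S hSq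

noncomputable def chainM (ch : Set (Piece P D)) : Set BinSeq → ℝ :=
  fun S => if h : ∃ p ∈ ch, S ∈ p.c then h.choose.m S else 0

lemma chainM_eq {ch : Set (Piece P D)} (hch : IsChain Piece.le ch)
    {p : Piece P D} (hp : p ∈ ch) {S : Set BinSeq} (hS : S ∈ p.c) :
    chainM ch S = p.m S := by
  have hex : ∃ p ∈ ch, S ∈ p.c := ⟨p, hp, hS⟩
  rw [chainM, dif_pos hex]
  exact chain_agree hch hex.choose_spec.1 hp hex.choose_spec.2 hS

/-- upper bound of a nonempty chain of pieces -/
noncomputable def chainUB {ch : Set (Piece P D)} (hch : IsChain Piece.le ch)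
    (hne : ch.Nonempty) : Piece P D where
  c := {S | ∃ p ∈ ch, S ∈ p.c}
  m := chainM ch
  huniv := ⟨hne.choose, hne.choose_spec, hne.choose.huniv⟩
  hcompl := by
    rintro S ⟨p, hp, hS⟩
    exact ⟨p, hp, p.hcompl S hS⟩
  hunion := by
    rintro S ⟨p, hp, hS⟩ T ⟨q, hq, hT⟩
    rcases chain_total hch hp hq with h | h
    · exact ⟨q, hq, q.hunion S (h.1 hS) T hT⟩
    · exact ⟨p, hp, p.hunion S hS T (h.1 hT)⟩
  hnonneg := by
    rintro S ⟨p, hp, hS⟩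
    show chainM ch S ≥ 0
    rw [chainM_eq hch hp hS]
    exact p.hnonneg S hS
  htotal := by
    obtain ⟨p, hp⟩ := hne
    show chainM ch Set.univ = 1
    rw [chainM_eq hch hp p.huniv]
    exact p.htotal
  hadd := by
    rintro S ⟨p, hp, hS⟩ T ⟨q, hq, hT⟩ hdisj
    obtain ⟨r, hr, hSr, hTr⟩ : ∃ r ∈ ch, S ∈ r.c ∧ T ∈ r.c := by
      rcases chain_total hch hp hq with h | h
      · exact ⟨q, hq, h.1 hS, hT⟩
      · exact ⟨p, hp, hS, h.1 hT⟩
    show chainM ch (S ∪ T) = chainM ch S + chainM ch T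
    rw [chainM_eq hch hr (r.hunion S hSr T hTr), chainM_eq hch hr hSr, chainM_eq hch hr hTr]
    exact r.hadd S hSr T hTr hdisj
  hcalg := by
    intro F hF
    obtain ⟨p, hp⟩ := hne
    have hFp := p.hcalg F hF
    refine ⟨⟨p, hp, hFp.1⟩, ?_⟩
    show chainM ch F = _
    rw [chainM_eq hch hp hFp.1]
    exact hFp.2
  hD := by
    obtain ⟨p, hp⟩ := hne
    refine ⟨⟨p, hp, p.hD.1⟩, ?_⟩
    show chainM ch D = 1
    rw [chainM_eq hch hp p.hD.1]
    exact p.hD.2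
  hdens := by
    rintro S ⟨p, hp, hS⟩ ε hε
    obtain ⟨F, hF, hlt⟩ := p.hdens S hS ε hε
    refine ⟨F, hF, ?_⟩
    have hSF : symmDiff S F ∈ p.c := p.toAlg.hsymmDiff hS (p.hcalg F hF).1
    show chainM ch (symmDiff S F) < ε
    rw [chainM_eq hch hp hSF]
    exact hlt

lemma chainUB_le {ch : Set (Piece P D)} (hch : IsChain Piece.le ch)
    (hne : ch.Nonempty) {p : Piece P D} (hp : p ∈ ch) : p.le (chainUB hch hne) := by
  constructor
  · intro S hS
    exact ⟨p, hp, hS⟩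
  · intro S hS
    exact chainM_eq hch hp hS

end Chain
end BD
namespace BD
open Classical Set MeasureTheory

section LM

variable {P : Measure BinSeq} [IsProbabilityMeasure P] {D : Set BinSeq}
variable (p : Piece P D)

def outS (X : Set BinSeq) : Set ℝ := {x | ∃ C ∈ p.c, X ⊆ C ∧ x = p.m C}
def innS (X : Set BinSeq) : Set ℝ := {x | ∃ C ∈ p.c, C ⊆ X ∧ x = p.m C}

noncomputable def out (X : Set BinSeq) : ℝ := sInf (outS p X)
noncomputable def inn (X : Set BinSeq) : ℝ := sSup (innS p X)

lemma outS_nonempty (X : Set BinSeq) : (outS p X).Nonempty :=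
  ⟨p.m Set.univ, Set.univ, p.huniv, Set.subset_univ X, rfl⟩

lemma outS_bddBelow (X : Set BinSeq) : BddBelow (outS p X) := by
  refine ⟨0, ?_⟩
  rintro x ⟨C, hC, _, rfl⟩
  exact p.hnonneg C hC

lemma innS_nonempty (X : Set BinSeq) : (innS p X).Nonempty :=
  ⟨p.m ∅, ∅, p.toAlg.hempty, Set.empty_subset X, rfl⟩

lemma innS_bddAbove (X : Set BinSeq) : BddAbove (innS p X) := by
  refine ⟨1, ?_⟩
  rintro x ⟨C, hC, _, rfl⟩
  exact p.toAlg.m_le_one hC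

lemma out_le {X C : Set BinSeq} (hC : C ∈ p.c) (h : X ⊆ C) : out p X ≤ p.m C :=
  csInf_le (outS_bddBelow p X) ⟨C, hC, h, rfl⟩

lemma le_out {X : Set BinSeq} {b : ℝ} (h : ∀ C ∈ p.c, X ⊆ C → b ≤ p.m C) : b ≤ out p X :=
  le_csInf (outS_nonempty p X) (by rintro x ⟨C, hC, hXC, rfl⟩; exact h C hC hXC)

lemma le_inn {X C : Set BinSeq} (hC : C ∈ p.c) (h : C ⊆ X) : p.m C ≤ inn p X :=
  le_csSup (innS_bddAbove p X) ⟨C, hC, h, rfl⟩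

lemma inn_le {X : Set BinSeq} {b : ℝ} (h : ∀ C ∈ p.c, C ⊆ X → p.m C ≤ b) : inn p X ≤ b :=
  csSup_le (innS_nonempty p X) (by rintro x ⟨C, hC, hCX, rfl⟩; exact h C hC hCX)

lemma out_nonneg (X : Set BinSeq) : 0 ≤ out p X :=
  le_out p (fun C hC _ => p.hnonneg C hC)

lemma inn_nonneg (X : Set BinSeq) : 0 ≤ inn p X := by
  have := le_inn p p.toAlg.hempty (Set.empty_subset X)
  rwa [p.toAlg.m_empty] at this

lemma out_exists {X : Set BinSeq} {ε : ℝ} (hε : 0 < ε) :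
    ∃ C ∈ p.c, X ⊆ C ∧ p.m C < out p X + ε := by
  obtain ⟨x, ⟨C, hC, hXC, rfl⟩, hlt⟩ :=
    exists_lt_of_csInf_lt (outS_nonempty p X) (lt_add_of_pos_right (out p X) hε)
  exact ⟨C, hC, hXC, hlt⟩

lemma inn_exists {X : Set BinSeq} {ε : ℝ} (hε : 0 < ε) :
    ∃ C ∈ p.c, C ⊆ X ∧ inn p X - ε < p.m C := by
  obtain ⟨x, ⟨C, hC, hCX, rfl⟩, hlt⟩ :=
    exists_lt_of_lt_csSup (innS_nonempty p X) (sub_lt_self (inn p X) hε)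
  exact ⟨C, hC, hCX, hlt⟩

lemma out_empty : out p ∅ = 0 := by
  have h1 := out_le p p.toAlg.hempty (Set.Subset.refl ∅)
  rw [p.toAlg.m_empty] at h1
  exact le_antisymm h1 (out_nonneg p ∅)

lemma inn_empty : inn p ∅ = 0 := by
  have h1 : inn p ∅ ≤ 0 := inn_le p (fun C hC hCe => by
    rw [Set.subset_empty_iff] at hCe
    rw [hCe, p.toAlg.m_empty])
  exact le_antisymm h1 (inn_nonneg p ∅)

/-- key duality: for `A` in the algebra, outer of `A ∩ X` plus inner of `A ∩ Xᶜ` is `m A`. -/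
lemma out_inn_split {A : Set BinSeq} (hA : A ∈ p.c) (X : Set BinSeq) :
    out p (A ∩ X) + inn p (A ∩ Xᶜ) = p.m A := by
  apply le_antisymm
  · -- out + inn ≤ m A :  for B ⊆ A∩Xᶜ,  A \ B ⊇ A∩X
    have h : inn p (A ∩ Xᶜ) ≤ p.m A - out p (A ∩ X) := by
      apply inn_le p
      intro B hB hBsub
      have hcov : A ∩ X ⊆ A \ B := by
        intro x ⟨hxA, hxX⟩
        exact ⟨hxA, fun hxB => (hBsub hxB).2 hxX⟩
      have h1 := out_le p (p.toAlg.hdiff hA hB) hcov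
      have h2 : p.m (A \ B) = p.m A - p.m B :=
        p.toAlg.m_diff hA hB (fun x hx => (hBsub hx).1)
      rw [h2] at h1
      linarith
    linarith
  · -- m A ≤ out + inn : for every cover C ⊇ A∩X, A\C ⊆ A∩Xᶜ
    have h : p.m A - inn p (A ∩ Xᶜ) ≤ out p (A ∩ X) := by
      apply le_out p
      intro C hC hsub
      have hsub2 : A \ C ⊆ A ∩ Xᶜ := by
        intro x ⟨hxA, hxC⟩
        refine ⟨hxA, fun hxX => hxC (hsub ⟨hxA, hxX⟩)⟩
      have h1 := le_inn p (p.toAlg.hdiff hA hC) hsub2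
      have he : A \ C = A \ (A ∩ C) := by
        ext x; simp only [Set.mem_diff, Set.mem_inter_iff]; tauto
      have h2 : p.m (A \ C) = p.m A - p.m (A ∩ C) := by
        rw [he]; exact p.toAlg.m_diff hA (p.toAlg.hinter hA hC) Set.inter_subset_left
      have h3 : p.m (A ∩ C) ≤ p.m C :=
        p.toAlg.m_mono (p.toAlg.hinter hA hC) hC Set.inter_subset_right
      linarith
    linarith

variable (E : Set BinSeq)

lemma out_add {A A' : Set BinSeq} (hA : A ∈ p.c) (hA' : A' ∈ p.c)
    (hd : Disjoint (A ∩ E) (A' ∩ E)) :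
    out p ((A ∩ E) ∪ (A' ∩ E)) = out p (A ∩ E) + out p (A' ∩ E) := by
  apply le_antisymm
  · -- subadditive
    apply le_of_forall_pos_le_add
    intro ε hε
    obtain ⟨C, hC, hXC, hCm⟩ := out_exists p (X := A ∩ E) (half_pos hε)
    obtain ⟨C', hC', hXC', hCm'⟩ := out_exists p (X := A' ∩ E) (half_pos hε)
    have h1 := out_le p (p.hunion C hC C' hC') (Set.union_subset_union hXC hXC')
    have h2 := p.toAlg.m_union_le hC hC'
    linarith
  · -- superadditive
    apply le_out p
    intro C hC hsub
    have hAA' : A ∩ E ∩ A' = ∅ := by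
      ext x
      simp only [Set.mem_inter_iff, Set.mem_empty_iff_false, iff_false]
      intro ⟨⟨hxA, hxE⟩, hxA'⟩
      exact Set.disjoint_left.1 hd ⟨hxA, hxE⟩ ⟨hxA', hxE⟩
    have hs1 : A ∩ E ⊆ C ∩ (A \ A') := by
      intro x hx
      refine ⟨hsub (Or.inl hx), hx.1, fun hxA' => ?_⟩
      exact absurd (Set.eq_empty_iff_forall_notMem.1 hAA' x ⟨hx, hxA'⟩) not_false
    have hs2 : A' ∩ E ⊆ C ∩ A' := fun x hx => ⟨hsub (Or.inr hx), hx.1⟩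
    have hm1 : C ∩ (A \ A') ∈ p.c := p.toAlg.hinter hC (p.toAlg.hdiff hA hA')
    have hm2 : C ∩ A' ∈ p.c := p.toAlg.hinter hC hA'
    have o1 := out_le p hm1 hs1
    have o2 := out_le p hm2 hs2
    have hdisj : Disjoint (C ∩ (A \ A')) (C ∩ A') := by
      rw [Set.disjoint_left]
      rintro x ⟨_, _, hxnA'⟩ ⟨_, hxA'⟩
      exact hxnA' hxA'
    have hu := p.hadd _ hm1 _ hm2 hdisj
    have hc := p.toAlg.m_mono (p.hunion _ hm1 _ hm2) hC
      (Set.union_subset Set.inter_subset_left Set.inter_subset_left)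
    linarith

lemma inn_add {B B' : Set BinSeq} (hB : B ∈ p.c) (hB' : B' ∈ p.c)
    (hd : Disjoint (B ∩ Eᶜ) (B' ∩ Eᶜ)) :
    inn p ((B ∩ Eᶜ) ∪ (B' ∩ Eᶜ)) = inn p (B ∩ Eᶜ) + inn p (B' ∩ Eᶜ) := by
  apply le_antisymm
  · -- ≤ : split any C ⊆ X ∪ Y
    apply inn_le p
    intro C hC hsub
    have hm1 : C ∩ (B \ B') ∈ p.c := p.toAlg.hinter hC (p.toAlg.hdiff hB hB')
    have hm2 : C \ (B \ B') ∈ p.c := p.toAlg.hdiff hC (p.toAlg.hdiff hB hB')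
    have hs1 : C ∩ (B \ B') ⊆ B ∩ Eᶜ := by
      rintro x ⟨hxC, hxB, hxnB'⟩
      rcases hsub hxC with h | h
      · exact h
      · exact absurd h.1 hxnB'
    have hs2 : C \ (B \ B') ⊆ B' ∩ Eᶜ := by
      rintro x ⟨hxC, hxn⟩
      rcases hsub hxC with h | h
      · rcases Classical.em (x ∈ B') with hB'x | hB'x
        · exact ⟨hB'x, h.2⟩
        · exact absurd ⟨h.1, hB'x⟩ hxn
      · exact h
    have i1 := le_inn p hm1 hs1
    have i2 := le_inn p hm2 hs2
    have hsplit : C = (C ∩ (B \ B')) ∪ (C \ (B \ B')) := by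
      rw [Set.inter_union_diff]
    have hdisj : Disjoint (C ∩ (B \ B')) (C \ (B \ B')) := by
      rw [Set.disjoint_left]
      rintro x ⟨_, hx⟩ ⟨_, hxn⟩
      exact hxn hx
    have := p.hadd _ hm1 _ hm2 hdisj
    rw [← hsplit] at this
    linarith
  · -- ≥ : approximate both from inside
    apply le_of_forall_pos_le_add
    intro ε hε
    obtain ⟨C, hC, hCX, hCm⟩ := inn_exists p (X := B ∩ Eᶜ) (half_pos hε)
    obtain ⟨C', hC', hCX', hCm'⟩ := inn_exists p (X := B' ∩ Eᶜ) (half_pos hε)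
    have hdisj : Disjoint C C' := (hd.mono hCX hCX')
    have hu := p.hadd _ hC _ hC' hdisj
    have h1 := le_inn p (p.hunion _ hC _ hC') (Set.union_subset_union hCX hCX')
    linarith

/-- carrier of the one-step extension -/
def lmC : Set (Set BinSeq) :=
  {S | ∃ A B, A ∈ p.c ∧ B ∈ p.c ∧ S = (A ∩ E) ∪ (B ∩ Eᶜ)}

/-- measure of the one-step extension -/
noncomputable def lmM : Set BinSeq → ℝ := fun S => out p (S ∩ E) + inn p (S ∩ Eᶜ)

lemma lmC_superset {S : Set BinSeq} (hS : S ∈ p.c) : S ∈ lmC p E :=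
  ⟨S, S, hS, hS, by rw [Set.inter_union_compl]⟩

lemma lmM_extends {S : Set BinSeq} (hS : S ∈ p.c) : lmM p E S = p.m S :=
  out_inn_split p hS E

lemma lmC_partE {S : Set BinSeq} (hS : S ∈ lmC p E) : ∃ A ∈ p.c, S ∩ E = A ∩ E := by
  obtain ⟨A, B, hA, hB, rfl⟩ := hS
  refine ⟨A, hA, ?_⟩
  ext x
  simp only [Set.mem_inter_iff, Set.mem_union, Set.mem_compl_iff]
  tauto

lemma lmC_partEc {S : Set BinSeq} (hS : S ∈ lmC p E) : ∃ B ∈ p.c, S ∩ Eᶜ = B ∩ Eᶜ := by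
  obtain ⟨A, B, hA, hB, rfl⟩ := hS
  refine ⟨B, hB, ?_⟩
  ext x
  simp only [Set.mem_inter_iff, Set.mem_union, Set.mem_compl_iff]
  tauto

lemma lmE_mem : E ∈ lmC p E :=
  ⟨Set.univ, ∅, p.huniv, p.toAlg.hempty, by simp⟩

/-- the one-step extension as an `Alg` -/
noncomputable def lmAlg : Alg where
  c := lmC p E
  m := lmM p E
  huniv := lmC_superset p E p.huniv
  hcompl := by
    rintro S ⟨A, B, hA, hB, rfl⟩
    refine ⟨Aᶜ, Bᶜ, p.hcompl A hA, p.hcompl B hB, ?_⟩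
    ext x
    simp only [Set.mem_compl_iff, Set.mem_union, Set.mem_inter_iff]
    by_cases hx : x ∈ E <;> [skip; skip] <;> constructor <;> intro h <;> tauto
  hunion := by
    rintro S ⟨A, B, hA, hB, rfl⟩ T ⟨A', B', hA', hB', rfl⟩
    refine ⟨A ∪ A', B ∪ B', p.hunion _ hA _ hA', p.hunion _ hB _ hB', ?_⟩
    ext x
    simp only [Set.mem_union, Set.mem_inter_iff, Set.mem_compl_iff]
    tauto
  hnonneg := fun S _ => add_nonneg (out_nonneg p _) (inn_nonneg p _)
  htotal := by
    show lmM p E Set.univ = 1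
    rw [lmM_extends p E p.huniv]
    exact p.htotal
  hadd := by
    intro S hS T hT hdisj
    obtain ⟨A, hA, hSE⟩ := lmC_partE p E hS
    obtain ⟨A', hA', hTE⟩ := lmC_partE p E hT
    obtain ⟨B, hB, hSEc⟩ := lmC_partEc p E hS
    obtain ⟨B', hB', hTEc⟩ := lmC_partEc p E hT
    show lmM p E (S ∪ T) = lmM p E S + lmM p E T
    have h1 : (S ∪ T) ∩ E = (A ∩ E) ∪ (A' ∩ E) := by
      rw [Set.union_inter_distrib_right, hSE, hTE]
    have h2 : (S ∪ T) ∩ Eᶜ = (B ∩ Eᶜ) ∪ (B' ∩ Eᶜ) := by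
      rw [Set.union_inter_distrib_right, hSEc, hTEc]
    have hdE : Disjoint (A ∩ E) (A' ∩ E) := by
      rw [← hSE, ← hTE]
      exact hdisj.mono Set.inter_subset_left Set.inter_subset_left
    have hdEc : Disjoint (B ∩ Eᶜ) (B' ∩ Eᶜ) := by
      rw [← hSEc, ← hTEc]
      exact hdisj.mono Set.inter_subset_left Set.inter_subset_left
    simp only [lmM]
    rw [h1, h2, out_add p E hA hA' hdE, inn_add p E hB hB' hdEc, hSE, hTE, hSEc, hTEc]
    ring

lemma lmAlg_density (hS : S ∈ lmC p E) {ε : ℝ} (hε : 0 < ε) :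
    ∃ F, CAlg F ∧ lmM p E (symmDiff S F) < ε := by
  obtain ⟨A, hA, hSE⟩ := lmC_partE p E hS
  obtain ⟨B, hB, hSEc⟩ := lmC_partEc p E hS
  have hε3 : 0 < ε / 3 := by linarith
  obtain ⟨CA, hCA, hCAsub, hCAm⟩ := out_exists p (X := S ∩ E) hε3
  obtain ⟨CB, hCB, hCBsub, hCBm⟩ := inn_exists p (X := S ∩ Eᶜ) hε3
  set C := CA ∪ CB with hCdef
  have hC : C ∈ p.c := p.hunion _ hCA _ hCB
  -- the symmetric difference S Δ C is contained in two small pieces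
  have hsub : symmDiff S C ⊆ (CA \ (S ∩ E)) ∪ ((S ∩ Eᶜ) \ CB) := by
    intro x hx
    rw [Set.mem_symmDiff] at hx
    rcases hx with ⟨hxS, hxC⟩ | ⟨hxC, hxS⟩
    · -- x ∈ S, x ∉ C.  x ∈ S∩E would give x ∈ CA ⊆ C; so x ∈ S∩Eᶜ, and x ∉ CB
      right
      rcases Classical.em (x ∈ E) with hxE | hxE
      · exact absurd (Or.inl (hCAsub ⟨hxS, hxE⟩)) hxC
      · exact ⟨⟨hxS, hxE⟩, fun hxCB => hxC (Or.inr hxCB)⟩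
    · -- x ∈ C, x ∉ S: since CB ⊆ S, x ∈ CA
      left
      rcases hxC with hxCA | hxCB
      · exact ⟨hxCA, fun hxSE => hxS hxSE.1⟩
      · exact absurd (hCBsub hxCB).1 hxS
  -- both pieces lie in the new algebra and have small measure
  have hmem1 : CA \ (S ∩ E) ∈ lmC p E := by
    refine ⟨CA \ A, CA, p.toAlg.hdiff hCA hA, hCA, ?_⟩
    rw [hSE]
    ext x
    simp only [Set.mem_diff, Set.mem_inter_iff, Set.mem_union, Set.mem_compl_iff]
    tauto
  have hmem2 : (S ∩ Eᶜ) \ CB ∈ lmC p E := by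
    refine ⟨∅, B \ CB, p.toAlg.hempty, p.toAlg.hdiff hB hCB, ?_⟩
    ext x
    have hx := Set.ext_iff.1 hSEc x
    simp only [Set.mem_diff, Set.mem_inter_iff, Set.mem_union, Set.mem_compl_iff,
      Set.mem_empty_iff_false, false_and, false_or] at hx ⊢
    tauto
  have hmemSE : S ∩ E ∈ lmC p E := by
    refine ⟨A, ∅, hA, p.toAlg.hempty, ?_⟩
    rw [hSE]; simp
  have hmemSEc : S ∩ Eᶜ ∈ lmC p E := by
    refine ⟨∅, B, p.toAlg.hempty, hB, ?_⟩
    rw [hSEc]; simp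
  -- compute the values
  have hvSE : lmM p E (S ∩ E) = out p (S ∩ E) := by
    rw [lmM]
    have h1 : S ∩ E ∩ E = S ∩ E := by rw [Set.inter_assoc, Set.inter_self]
    have h2 : S ∩ E ∩ Eᶜ = ∅ := by rw [Set.inter_assoc, Set.inter_compl_self, Set.inter_empty]
    simp only [h1, h2, inn_empty, add_zero]
  have hvSEc : lmM p E (S ∩ Eᶜ) = inn p (S ∩ Eᶜ) := by
    rw [lmM]
    have h1 : S ∩ Eᶜ ∩ E = ∅ := by
      rw [Set.inter_assoc, Set.compl_inter_self, Set.inter_empty]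
    have h2 : S ∩ Eᶜ ∩ Eᶜ = S ∩ Eᶜ := by rw [Set.inter_assoc, Set.inter_self]
    simp only [h1, h2, out_empty, zero_add]
  set qA := lmAlg p E with hqA
  have hqc : qA.c = lmC p E := rfl
  have hqm : qA.m = lmM p E := rfl
  -- bound the two pieces
  have hb1 : qA.m (CA \ (S ∩ E)) < ε / 3 := by
    have hd := qA.m_diff (hqc ▸ lmC_superset p E hCA) (hqc ▸ hmemSE) hCAsub
    rw [hqm] at hd
    rw [hqm, hd, lmM_extends p E hCA, hvSE]
    linarith
  have hb2 : qA.m ((S ∩ Eᶜ) \ CB) < ε / 3 := by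
    have hd := qA.m_diff (hqc ▸ hmemSEc) (hqc ▸ lmC_superset p E hCB) hCBsub
    rw [hqm] at hd
    rw [hqm, hd, lmM_extends p E hCB, hvSEc]
    linarith
  -- approximate C by a cylinder-algebra set
  obtain ⟨F, hF, hFm⟩ := p.hdens C hC (ε / 3) hε3
  refine ⟨F, hF, ?_⟩
  have hFp : F ∈ p.c := (p.hcalg F hF).1
  have hmemSC : symmDiff S C ∈ qA.c := qA.hsymmDiff (hqc ▸ hS) (hqc ▸ lmC_superset p E hC)
  have hmemCF : symmDiff C F ∈ qA.c := hqc ▸ lmC_superset p E (p.toAlg.hsymmDiff hC hFp)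
  have hSC : qA.m (symmDiff S C) < ε / 3 + ε / 3 := by
    have := qA.m_subset_add hmemSC (hqc ▸ hmem1) (hqc ▸ hmem2) hsub
    linarith
  have hCF : qA.m (symmDiff C F) < ε / 3 := by
    rw [hqm, lmM_extends p E (p.toAlg.hsymmDiff hC hFp)]
    exact hFm
  have htri : symmDiff S F ⊆ symmDiff S C ∪ symmDiff C F := symmDiff_triangle S C F
  have hfin := qA.m_subset_add (qA.hsymmDiff (hqc ▸ hS) (hqc ▸ lmC_superset p E hFp))
    hmemSC hmemCF htri
  rw [hqm] at hfin hSC hCF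
  calc lmM p E (symmDiff S F) ≤ lmM p E (symmDiff S C) + lmM p E (symmDiff C F) := hfin
    _ < ε := by linarith

/-- the one-step extension as a `Piece` -/
noncomputable def lmPiece : Piece P D where
  toAlg := lmAlg p E
  hcalg := by
    intro F hF
    have hFp := p.hcalg F hF
    refine ⟨lmC_superset p E hFp.1, ?_⟩
    show lmM p E F = _
    rw [lmM_extends p E hFp.1]
    exact hFp.2
  hD := by
    refine ⟨lmC_superset p E p.hD.1, ?_⟩
    show lmM p E D = 1
    rw [lmM_extends p E p.hD.1]
    exact p.hD.2
  hdens := by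
    intro S hS ε hε
    exact lmAlg_density p E hS hε

lemma lmPiece_le : p.le (lmPiece p E) :=
  ⟨fun S hS => lmC_superset p E hS, fun S hS => lmM_extends p E hS⟩

end LM

section Maximal

variable {P : Measure BinSeq} [IsProbabilityMeasure P] {D : Set BinSeq}

/-- Zorn's lemma gives a piece defined on all subsets. -/
theorem exists_full_piece (P : Measure BinSeq) [IsProbabilityMeasure P]
    (D : Set BinSeq) (hDd : DenseIn D) :
    ∃ q : Piece P D, q.c = Set.univ := by
  obtain ⟨pm, hpm⟩ := exists_maximal_of_chains_bounded (r := Piece.le (P := P) (D := D))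
    (fun ch hch => by
      by_cases hne : ch.Nonempty
      · exact ⟨chainUB hch hne, fun a ha => chainUB_le hch hne ha⟩
      · refine ⟨basePiece P D hDd, fun a ha => ?_⟩
        exact absurd ⟨a, ha⟩ hne)
    (fun h1 h2 => Piece.le_trans h1 h2)
  refine ⟨pm, ?_⟩
  rw [Set.eq_univ_iff_forall]
  intro E
  by_contra hE
  have hle := hpm (lmPiece pm E) (lmPiece_le pm E)
  exact hE (hle.1 (lmE_mem pm E))

end Maximal
end BD
namespace BD
open Classical Set MeasureTheory

section MergeDefs

/-- truncated projection between prefix levels -/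
def projT (t s : ℕ) : V s → V t := fun w i => if h : (i : ℕ) < s then w ⟨i, h⟩ else false

lemma projT_pre {t s : ℕ} (h : t ≤ s) (ω : BinSeq) : projT t s (pre s ω) = pre t ω := by
  funext i
  have hi : (i : ℕ) < s := lt_of_lt_of_le i.isLt h
  simp [projT, pre, hi]

lemma projT_comp {t s u : ℕ} (h1 : t ≤ s) (h2 : s ≤ u) (w : V u) :
    projT t s (projT s u w) = projT t u w := by
  funext i
  have h3 : (i : ℕ) < s := lt_of_lt_of_le i.isLt h1
  have h4 : (i : ℕ) < u := lt_of_lt_of_le h3 h2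
  simp [projT, h3, h4]

lemma cylV_fiber {t s : ℕ} (h : t ≤ s) (v : V t) :
    cylV v = cylSet (Finset.univ.filter (fun w : V s => projT t s w = v)) := by
  ext ω
  simp only [mem_cylV, mem_cylSet, Finset.mem_filter, Finset.mem_univ, true_and]
  rw [← projT_pre h ω]

lemma sum_fiber {t s : ℕ} (F : V s → ℝ) :
    ∑ v : V t, ∑ w ∈ Finset.univ.filter (fun w : V s => projT t s w = v), F w
      = ∑ w : V s, F w :=
  Finset.sum_fiberwise_of_maps_to (fun x _ => Finset.mem_univ _) F

variable {A : SetAlgebra BinSeq}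

noncomputable def pr (P : Measure BinSeq) (t : ℕ) (v : V t) : ℝ := (P (cylV v)).toReal

def qr (Q' : FA A) (t : ℕ) (v : V t) : ℝ := Q'.m (cylV v)

noncomputable def fr (P : Measure BinSeq) (Q' : FA A) (t : ℕ) (v : V t) : ℝ :=
  qr Q' t v / pr P t v

noncomputable def gr (P : Measure BinSeq) (Q' : FA A) (l : ℝ) (t : ℕ) (v : V t) : ℝ :=
  min (fr P Q' t v) l

noncomputable def Eg (P : Measure BinSeq) (t : ℕ) (h : V t → ℝ) : ℝ :=
  ∑ v : V t, pr P t v * h v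

noncomputable def Tail (P : Measure BinSeq) (Q' : FA A) (l : ℝ) (t : ℕ) : ℝ :=
  ∑ v : V t, max (qr Q' t v - l * pr P t v) 0

noncomputable def Dist (P : Measure BinSeq) (Q' : FA A) (t s : ℕ) : ℝ :=
  ∑ w : V s, |qr Q' s w - fr P Q' t (projT t s w) * pr P s w|

noncomputable def LocD (P : Measure BinSeq) (Q' : FA A) (t s : ℕ) (v : V t) : ℝ :=
  ∑ w ∈ Finset.univ.filter (fun w : V s => projT t s w = v),
    |qr Q' s w - fr P Q' t v * pr P s w|

variable (P : Measure BinSeq) [IsProbabilityMeasure P] (Q' : FA A)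

lemma pr_pos (hpos : ∀ (ω : BinSeq) (t : ℕ), 0 < P (cyl ω t)) (t : ℕ) (v : V t) :
    0 < pr P t v := by
  rw [pr, cylV_eq_cyl]
  exact ENNReal.toReal_pos (hpos (vext v) t).ne' (measure_ne_top P _)

lemma pr_nonneg (t : ℕ) (v : V t) : 0 ≤ pr P t v := ENNReal.toReal_nonneg

lemma pr_sum_one (t : ℕ) : ∑ v : V t, pr P t v = 1 := by
  have := P_cylSet_sum P (Finset.univ : Finset (V t))
  rw [cylSet_univ] at this
  simp only [measure_univ, ENNReal.toReal_one] at this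
  exact this.symm

lemma qr_nonneg (hO : ∀ S, MeasurableSet S → S ∈ A.sets) (t : ℕ) (v : V t) :
    0 ≤ qr Q' t v := Q'.nonneg _ (hO _ (measurableSet_cylV v))

lemma qr_sum_one (hO : ∀ S, MeasurableSet S → S ∈ A.sets) (t : ℕ) :
    ∑ v : V t, qr Q' t v = 1 := by
  have := (faAlg Q').m_cylSet_sum (fun S hS => hO S hS) (Finset.univ : Finset (V t))
  rw [cylSet_univ] at this
  have ht : (faAlg Q').m Set.univ = 1 := Q'.total
  rw [ht] at this
  exact this.symm

lemma pr_fiber {t s : ℕ} (h : t ≤ s) (v : V t) :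
    pr P t v = ∑ w ∈ Finset.univ.filter (fun w : V s => projT t s w = v), pr P s w := by
  rw [pr, cylV_fiber h v, P_cylSet_sum]
  rfl

lemma qr_fiber (hO : ∀ S, MeasurableSet S → S ∈ A.sets) {t s : ℕ} (h : t ≤ s) (v : V t) :
    qr Q' t v = ∑ w ∈ Finset.univ.filter (fun w : V s => projT t s w = v), qr Q' s w := by
  rw [qr, cylV_fiber h v]
  exact (faAlg Q').m_cylSet_sum (fun S hS => hO S hS) _

lemma qr_eq_fr_mul (hpos : ∀ (ω : BinSeq) (t : ℕ), 0 < P (cyl ω t)) (t : ℕ) (v : V t) :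
    fr P Q' t v * pr P t v = qr Q' t v := by
  rw [fr, div_mul_cancel₀]
  exact (pr_pos P hpos t v).ne'

end MergeDefs
end BD
namespace BD
open Classical Set MeasureTheory

section MergeCore

variable {A : SetAlgebra BinSeq}
variable (P : Measure BinSeq) [IsProbabilityMeasure P] (Q' : FA A)

lemma min_eq_sub_max (a b : ℝ) : min a b = a - max (a - b) 0 := by
  rcases le_total a b with h | h
  · rw [min_eq_left h, max_eq_right (by linarith), sub_zero]
  · rw [min_eq_right h, max_eq_left (by linarith)]
    ring

lemma pg_eq (hpos : ∀ (ω : BinSeq) (t : ℕ), 0 < P (cyl ω t)) (l : ℝ) (t : ℕ) (v : V t) :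
    pr P t v * gr P Q' l t v = min (qr Q' t v) (l * pr P t v) := by
  have hp := pr_pos P hpos t v
  rw [gr, mul_comm, min_mul_of_nonneg _ _ (le_of_lt hp), qr_eq_fr_mul P Q' hpos]

lemma sum_proj_mul {t s : ℕ} (G : V s → ℝ) (k : V t → ℝ) :
    ∑ w : V s, G w * k (projT t s w)
      = ∑ v : V t, k v * ∑ w ∈ Finset.univ.filter (fun w : V s => projT t s w = v), G w := by
  rw [← sum_fiber (t := t) (fun w => G w * k (projT t s w))]
  apply Finset.sum_congr rfl
  intro v _
  rw [Finset.mul_sum]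
  apply Finset.sum_congr rfl
  intro w hw
  rw [Finset.mem_filter] at hw
  rw [hw.2, mul_comm]

lemma fiber_super (hpos : ∀ (ω : BinSeq) (t : ℕ), 0 < P (cyl ω t))
    (hO : ∀ S, MeasurableSet S → S ∈ A.sets) (l : ℝ) {t s : ℕ} (h : t ≤ s) (v : V t) :
    ∑ w ∈ Finset.univ.filter (fun w : V s => projT t s w = v), pr P s w * gr P Q' l s w
      ≤ pr P t v * gr P Q' l t v := by
  rw [pg_eq P Q' hpos]
  calc ∑ w ∈ Finset.univ.filter (fun w : V s => projT t s w = v), pr P s w * gr P Q' l s w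
      = ∑ w ∈ Finset.univ.filter (fun w : V s => projT t s w = v),
          min (qr Q' s w) (l * pr P s w) := by
        apply Finset.sum_congr rfl
        intro w _
        rw [pg_eq P Q' hpos]
    _ ≤ min (qr Q' t v) (l * pr P t v) := by
        apply le_min
        · calc _ ≤ ∑ w ∈ Finset.univ.filter (fun w : V s => projT t s w = v), qr Q' s w :=
                Finset.sum_le_sum (fun w _ => min_le_left _ _)
            _ = qr Q' t v := (qr_fiber Q' hO h v).symm
        · calc _ ≤ ∑ w ∈ Finset.univ.filter (fun w : V s => projT t s w = v), l * pr P s w :=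
                Finset.sum_le_sum (fun w _ => min_le_right _ _)
            _ = l * pr P t v := by rw [← Finset.mul_sum, ← pr_fiber P h v]

lemma Eg_gr_eq (hpos : ∀ (ω : BinSeq) (t : ℕ), 0 < P (cyl ω t))
    (hO : ∀ S, MeasurableSet S → S ∈ A.sets) (l : ℝ) (t : ℕ) :
    Eg P t (gr P Q' l t) = 1 - Tail P Q' l t := by
  rw [Eg, Tail, ← qr_sum_one Q' hO t, ← Finset.sum_sub_distrib]
  apply Finset.sum_congr rfl
  intro v _
  rw [pg_eq P Q' hpos, min_eq_sub_max]

lemma Tail_nonneg (l : ℝ) (t : ℕ) : 0 ≤ Tail P Q' l t :=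
  Finset.sum_nonneg fun v _ => le_max_right _ _

lemma fr_nonneg (hpos : ∀ (ω : BinSeq) (t : ℕ), 0 < P (cyl ω t))
    (hO : ∀ S, MeasurableSet S → S ∈ A.sets) (t : ℕ) (v : V t) : 0 ≤ fr P Q' t v :=
  div_nonneg (qr_nonneg Q' hO t v) (pr_nonneg P t v)

lemma gr_nonneg (hpos : ∀ (ω : BinSeq) (t : ℕ), 0 < P (cyl ω t))
    (hO : ∀ S, MeasurableSet S → S ∈ A.sets) {l : ℝ} (hl : 0 ≤ l) (t : ℕ) (v : V t) :
    0 ≤ gr P Q' l t v := le_min (fr_nonneg P Q' hpos hO t v) hl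

lemma Eg_gr_le_one (hpos : ∀ (ω : BinSeq) (t : ℕ), 0 < P (cyl ω t))
    (hO : ∀ S, MeasurableSet S → S ∈ A.sets) (l : ℝ) (t : ℕ) :
    Eg P t (gr P Q' l t) ≤ 1 := by
  rw [Eg, ← qr_sum_one Q' hO t]
  apply Finset.sum_le_sum
  intro v _
  calc pr P t v * gr P Q' l t v ≤ pr P t v * fr P Q' t v :=
        mul_le_mul_of_nonneg_left (min_le_left _ _) (pr_nonneg P t v)
    _ = qr Q' t v := by rw [mul_comm]; exact qr_eq_fr_mul P Q' hpos t v

lemma Eg_sq_le (hpos : ∀ (ω : BinSeq) (t : ℕ), 0 < P (cyl ω t))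
    (hO : ∀ S, MeasurableSet S → S ∈ A.sets) {l : ℝ} (hl : 0 ≤ l) (t : ℕ) :
    Eg P t (fun v => (gr P Q' l t v) ^ 2) ≤ l ^ 2 := by
  rw [Eg]
  calc ∑ v : V t, pr P t v * gr P Q' l t v ^ 2
      ≤ ∑ v : V t, pr P t v * l ^ 2 := by
        apply Finset.sum_le_sum
        intro v _
        apply mul_le_mul_of_nonneg_left _ (pr_nonneg P t v)
        have h1 := gr_nonneg P Q' hpos hO hl t v
        have h2 : gr P Q' l t v ≤ l := min_le_right _ _
        nlinarith
    _ = l ^ 2 := by rw [← Finset.sum_mul, pr_sum_one P t, one_mul]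

lemma Eg_sq_nonneg (t : ℕ) (k : V t → ℝ) : 0 ≤ Eg P t (fun v => (k v) ^ 2) :=
  Finset.sum_nonneg fun v _ => mul_nonneg (pr_nonneg P t v) (sq_nonneg _)

/-- the one-step L² inequality for the truncated supermartingale -/
lemma sq_ineq (hpos : ∀ (ω : BinSeq) (t : ℕ), 0 < P (cyl ω t))
    (hO : ∀ S, MeasurableSet S → S ∈ A.sets) {l : ℝ} (hl : 0 ≤ l) {t s : ℕ} (h : t ≤ s) :
    ∑ w : V s, pr P s w * (gr P Q' l s w - gr P Q' l t (projT t s w)) ^ 2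
      ≤ (Eg P s (fun w => (gr P Q' l s w) ^ 2) - Eg P t (fun v => (gr P Q' l t v) ^ 2))
        + 2 * l * (Eg P t (gr P Q' l t) - Eg P s (gr P Q' l s)) := by
  set gs := gr P Q' l s with hgs
  set gt := gr P Q' l t with hgt
  have expand : ∑ w : V s, pr P s w * (gs w - gt (projT t s w)) ^ 2
      = Eg P s (fun w => (gs w) ^ 2)
        - 2 * ∑ w : V s, (pr P s w * gs w) * gt (projT t s w)
        + ∑ w : V s, pr P s w * gt (projT t s w) ^ 2 := by
    rw [Eg, Finset.mul_sum, ← Finset.sum_sub_distrib, ← Finset.sum_add_distrib]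
    apply Finset.sum_congr rfl
    intro w _
    ring
  have hA1 : ∑ w : V s, pr P s w * gt (projT t s w) ^ 2
      = Eg P t (fun v => (gt v) ^ 2) := by
    have := sum_proj_mul (t := t) (s := s) (fun w => pr P s w) (fun v => (gt v) ^ 2)
    rw [this, Eg]
    apply Finset.sum_congr rfl
    intro v _
    rw [← pr_fiber P h v, mul_comm]
  set X := ∑ w : V s, (pr P s w * gs w) * gt (projT t s w) with hX
  have hXv : X = ∑ v : V t, gt v *
      ∑ w ∈ Finset.univ.filter (fun w : V s => projT t s w = v), pr P s w * gs w :=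
    sum_proj_mul _ _
  have hEgs : Eg P s gs = ∑ v : V t, ∑ w ∈ Finset.univ.filter
      (fun w : V s => projT t s w = v), pr P s w * gs w :=
    (sum_fiber _).symm
  have hkey : Eg P t (fun v => (gt v) ^ 2) - X ≤ l * (Eg P t gt - Eg P s gs) := by
    rw [hXv, Eg, hEgs, Eg, ← Finset.sum_sub_distrib, ← Finset.sum_sub_distrib, Finset.mul_sum]
    apply Finset.sum_le_sum
    intro v _
    have hbr : 0 ≤ pr P t v * gt v - ∑ w ∈ Finset.univ.filter
        (fun w : V s => projT t s w = v), pr P s w * gs w := by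
      have := fiber_super P Q' hpos hO l h v
      linarith
    have h1 : 0 ≤ gt v := gr_nonneg P Q' hpos hO hl t v
    have h2 : gt v ≤ l := min_le_right _ _
    calc pr P t v * (gt v) ^ 2 - gt v * ∑ w ∈ Finset.univ.filter
          (fun w : V s => projT t s w = v), pr P s w * gs w
        = gt v * (pr P t v * gt v - ∑ w ∈ Finset.univ.filter
          (fun w : V s => projT t s w = v), pr P s w * gs w) := by ring
      _ ≤ l * (pr P t v * gt v - ∑ w ∈ Finset.univ.filter
          (fun w : V s => projT t s w = v), pr P s w * gs w) :=
          mul_le_mul_of_nonneg_right h2 hbr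
  rw [expand, hA1]
  nlinarith [hkey]

end MergeCore
end BD
namespace BD
open Classical Set MeasureTheory

section MergeCore2

variable {A : SetAlgebra BinSeq}
variable (P : Measure BinSeq) [IsProbabilityMeasure P] (Q' : FA A)

lemma abs_q_eq (hpos : ∀ (ω : BinSeq) (t : ℕ), 0 < P (cyl ω t)) {s : ℕ} (w : V s)
    (c : ℝ) : |qr Q' s w - c * pr P s w| = pr P s w * |fr P Q' s w - c| := by
  have h : qr Q' s w - c * pr P s w = pr P s w * (fr P Q' s w - c) := by
    rw [mul_sub, mul_comm (pr P s w), qr_eq_fr_mul P Q' hpos, mul_comm (pr P s w) c]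
  rw [h, abs_mul, abs_of_nonneg (pr_nonneg P s w)]

lemma abs_sub_trunc (a b l : ℝ) :
    |a - b| ≤ |min a l - min b l| + max (a - l) 0 + max (b - l) 0 := by
  have ha : a = min a l + max (a - l) 0 := by rw [min_eq_sub_max]; ring
  have hb : b = min b l + max (b - l) 0 := by rw [min_eq_sub_max]; ring
  have h1 : 0 ≤ max (a - l) 0 := le_max_right _ _
  have h2 : 0 ≤ max (b - l) 0 := le_max_right _ _
  have key : a - b = (min a l - min b l) + (max (a - l) 0 - max (b - l) 0) := by
    nth_rewrite 1 [ha]; nth_rewrite 1 [hb]; ring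
  rw [key]
  calc |min a l - min b l + (max (a - l) 0 - max (b - l) 0)|
      ≤ |min a l - min b l| + |max (a - l) 0 - max (b - l) 0| := abs_add_le _ _
    _ ≤ |min a l - min b l| + (max (a - l) 0 + max (b - l) 0) := by
        have : |max (a - l) 0 - max (b - l) 0| ≤ max (a - l) 0 + max (b - l) 0 :=
          abs_le.2 ⟨by linarith, by linarith⟩
        linarith
    _ = _ := by ring

lemma p_mul_tail_term (hpos : ∀ (ω : BinSeq) (t : ℕ), 0 < P (cyl ω t)) {t : ℕ} (l : ℝ)
    (v : V t) : pr P t v * max (fr P Q' t v - l) 0 = max (qr Q' t v - l * pr P t v) 0 := by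
  rw [mul_max_of_nonneg _ _ (pr_nonneg P t v), mul_zero, mul_sub,
    mul_comm (pr P t v), qr_eq_fr_mul P Q' hpos, mul_comm (pr P t v) l]

/-- the distance between levels is controlled by the truncated distance plus tails -/
lemma Dist_le_trunc (hpos : ∀ (ω : BinSeq) (t : ℕ), 0 < P (cyl ω t)) (l : ℝ) {t s : ℕ}
    (h : t ≤ s) :
    Dist P Q' t s ≤ (∑ w : V s, pr P s w * |gr P Q' l s w - gr P Q' l t (projT t s w)|)
      + Tail P Q' l t + Tail P Q' l s := by
  have hts : ∑ w : V s, pr P s w * max (fr P Q' s w - l) 0 = Tail P Q' l s := by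
    rw [Tail]
    exact Finset.sum_congr rfl fun w _ => p_mul_tail_term P Q' hpos l w
  have htt : ∑ w : V s, pr P s w * max (fr P Q' t (projT t s w) - l) 0 = Tail P Q' l t := by
    rw [Tail, sum_proj_mul (t := t) (s := s) (fun w => pr P s w)
      (fun v => max (fr P Q' t v - l) 0)]
    apply Finset.sum_congr rfl
    intro v _
    rw [← pr_fiber P h v, mul_comm, p_mul_tail_term P Q' hpos l v]
  rw [Dist, ← hts, ← htt, ← Finset.sum_add_distrib, ← Finset.sum_add_distrib]
  apply Finset.sum_le_sum
  intro w _
  rw [abs_q_eq P Q' hpos w _]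
  calc pr P s w * |fr P Q' s w - fr P Q' t (projT t s w)|
      ≤ pr P s w * (|gr P Q' l s w - gr P Q' l t (projT t s w)|
          + max (fr P Q' s w - l) 0 + max (fr P Q' t (projT t s w) - l) 0) :=
        mul_le_mul_of_nonneg_left (abs_sub_trunc _ _ l) (pr_nonneg P s w)
    _ = _ := by ring

/-- Cauchy–Schwarz for the weighted sums -/
lemma weighted_cs (s : ℕ) (d : V s → ℝ) :
    (∑ w : V s, pr P s w * |d w|) ^ 2 ≤ ∑ w : V s, pr P s w * (d w) ^ 2 := by
  have key := Finset.sum_mul_sq_le_sq_mul_sq Finset.univ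
    (fun w : V s => Real.sqrt (pr P s w)) (fun w => Real.sqrt (pr P s w) * |d w|)
  have h1 : ∀ w : V s, Real.sqrt (pr P s w) * (Real.sqrt (pr P s w) * |d w|)
      = pr P s w * |d w| := fun w => by
    rw [← mul_assoc, Real.mul_self_sqrt (pr_nonneg P s w)]
  have h2 : ∀ w : V s, Real.sqrt (pr P s w) ^ 2 = pr P s w := fun w =>
    Real.sq_sqrt (pr_nonneg P s w)
  have h3 : ∀ w : V s, (Real.sqrt (pr P s w) * |d w|) ^ 2 = pr P s w * (d w) ^ 2 := fun w => by
    rw [mul_pow, h2, sq_abs]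
  rw [Finset.sum_congr rfl (fun w _ => h1 w), Finset.sum_congr rfl (fun w _ => h2 w),
    Finset.sum_congr rfl (fun w _ => h3 w), pr_sum_one P s, one_mul] at key
  exact key

lemma fiber_filter_eq {t s u : ℕ} (h1 : t ≤ s) (h2 : s ≤ u) {v : V t} {w : V s}
    (hw : projT t s w = v) :
    (Finset.univ.filter (fun w' : V u => projT t u w' = v)).filter
        (fun w' => projT s u w' = w)
      = Finset.univ.filter (fun w' : V u => projT s u w' = w) := by
  ext w'
  simp only [Finset.mem_filter, Finset.mem_univ, true_and]
  constructor
  · intro h; exact h.2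
  · intro h; exact ⟨by rw [← projT_comp h1 h2, h, hw], h⟩

lemma LocD_eq_sum {t s u : ℕ} (h1 : t ≤ s) (h2 : s ≤ u) (v : V t) :
    LocD P Q' t u v = ∑ w ∈ Finset.univ.filter (fun w : V s => projT t s w = v),
      ∑ w' ∈ Finset.univ.filter (fun w' : V u => projT s u w' = w),
        |qr Q' u w' - fr P Q' t v * pr P u w'| := by
  rw [LocD]
  rw [← Finset.sum_fiberwise_of_maps_to (g := projT s u)
    (t := Finset.univ.filter (fun w : V s => projT t s w = v))
    (fun w' hw' => by
      rw [Finset.mem_filter] at hw'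
      rw [Finset.mem_filter]
      exact ⟨Finset.mem_univ _, by rw [projT_comp h1 h2]; exact hw'.2⟩)
    (fun w' => |qr Q' u w' - fr P Q' t v * pr P u w'|)]
  apply Finset.sum_congr rfl
  intro w hw
  rw [Finset.mem_filter] at hw
  rw [fiber_filter_eq h1 h2 hw.2]

lemma LocD_mono (hpos : ∀ (ω : BinSeq) (t : ℕ), 0 < P (cyl ω t))
    (hO : ∀ S, MeasurableSet S → S ∈ A.sets) {t s u : ℕ} (h1 : t ≤ s) (h2 : s ≤ u)
    (v : V t) : LocD P Q' t s v ≤ LocD P Q' t u v := by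
  rw [LocD_eq_sum P Q' h1 h2 v, LocD]
  apply Finset.sum_le_sum
  intro w _
  have hq := qr_fiber Q' hO h2 w
  have hp := pr_fiber P h2 w
  calc |qr Q' s w - fr P Q' t v * pr P s w|
      = |∑ w' ∈ Finset.univ.filter (fun w' : V u => projT s u w' = w),
          (qr Q' u w' - fr P Q' t v * pr P u w')| := by
        rw [Finset.sum_sub_distrib, ← Finset.mul_sum, ← hq, ← hp]
    _ ≤ _ := Finset.abs_sum_le_sum_abs _ _

lemma Dist_eq_sum_LocD {t s : ℕ} (h : t ≤ s) :
    Dist P Q' t s = ∑ v : V t, LocD P Q' t s v := by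
  rw [Dist, ← sum_fiber (t := t)]
  apply Finset.sum_congr rfl
  intro v _
  rw [LocD]
  apply Finset.sum_congr rfl
  intro w hw
  rw [Finset.mem_filter] at hw
  rw [hw.2]

lemma Dist_mono (hpos : ∀ (ω : BinSeq) (t : ℕ), 0 < P (cyl ω t))
    (hO : ∀ S, MeasurableSet S → S ∈ A.sets) {t s u : ℕ} (h1 : t ≤ s) (h2 : s ≤ u) :
    Dist P Q' t s ≤ Dist P Q' t u := by
  rw [Dist_eq_sum_LocD P Q' h1, Dist_eq_sum_LocD P Q' (h1.trans h2)]
  exact Finset.sum_le_sum fun v _ => LocD_mono P Q' hpos hO h1 h2 v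

/-- uniform integrability from the absolute-continuity modulus -/
lemma UI (hpos : ∀ (ω : BinSeq) (t : ℕ), 0 < P (cyl ω t))
    (hO : ∀ S, MeasurableSet S → S ∈ A.sets)
    (hmodP : ∀ α > (0:ℝ), ∃ δ > (0:ℝ), ∀ (t : ℕ) (W : Finset (V t)),
      (P (cylSet W)).toReal < δ → Q'.m (cylSet W) < α)
    {α : ℝ} (hα : 0 < α) : ∃ l : ℝ, 1 ≤ l ∧ ∀ t, Tail P Q' l t < α := by
  obtain ⟨δ, hδ, hmod⟩ := hmodP α hα
  refine ⟨max 1 (2 / δ), le_max_left _ _, ?_⟩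
  intro t
  set l := max 1 (2 / δ) with hl
  have hl1 : (1:ℝ) ≤ l := le_max_left _ _
  have hlpos : 0 < l := by linarith
  set Hi := Finset.univ.filter (fun v : V t => l * pr P t v < qr Q' t v) with hHi
  have htail : Tail P Q' l t = ∑ v ∈ Hi, (qr Q' t v - l * pr P t v) := by
    rw [Tail, Finset.sum_filter]
    apply Finset.sum_congr rfl
    intro v _
    rcases lt_or_ge (l * pr P t v) (qr Q' t v) with hv | hv
    · rw [if_pos hv, max_eq_left (by linarith)]
    · rw [if_neg (not_lt.2 hv), max_eq_right (by linarith)]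
  have hsumhi : l * ∑ v ∈ Hi, pr P t v ≤ 1 := by
    rw [Finset.mul_sum]
    calc ∑ v ∈ Hi, l * pr P t v ≤ ∑ v ∈ Hi, qr Q' t v :=
          Finset.sum_le_sum (fun v hv => by
            rw [hHi, Finset.mem_filter] at hv
            exact le_of_lt hv.2)
      _ ≤ ∑ v : V t, qr Q' t v := Finset.sum_le_sum_of_subset_of_nonneg
          (Finset.filter_subset _ _) (fun v _ _ => qr_nonneg Q' hO t v)
      _ = 1 := qr_sum_one Q' hO t
  have hPsmall : (P (cylSet Hi)).toReal < δ := by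
    rw [P_cylSet_sum]
    have h1 : ∑ v ∈ Hi, pr P t v ≤ 1 / l := by
      rw [le_div_iff₀ hlpos]
      linarith [hsumhi]
    have h2 : 1 / l ≤ δ / 2 := by
      have hle : 2 / δ ≤ l := le_max_right _ _
      have h20 : (0:ℝ) < 2 / δ := by positivity
      have := one_div_le_one_div_of_le h20 hle
      rwa [one_div_div] at this
    calc ∑ v ∈ Hi, pr P t v ≤ δ / 2 := le_trans h1 h2
      _ < δ := by linarith
  have hQsmall := hmod t Hi hPsmall
  have hQeq : Q'.m (cylSet Hi) = ∑ v ∈ Hi, qr Q' t v :=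
    (faAlg Q').m_cylSet_sum (fun S hS => hO S hS) Hi
  rw [htail]
  calc ∑ v ∈ Hi, (qr Q' t v - l * pr P t v) ≤ ∑ v ∈ Hi, qr Q' t v :=
        Finset.sum_le_sum (fun v _ => by
          have := mul_nonneg (le_of_lt hlpos) (pr_nonneg P t v)
          linarith)
    _ < α := by rw [← hQeq]; exact hQsmall

end MergeCore2
end BD
namespace BD
open Classical Set MeasureTheory

section Cauchy

variable {A : SetAlgebra BinSeq}
variable (P : Measure BinSeq) [IsProbabilityMeasure P] (Q' : FA A)

lemma sum_even_lower {c : ℝ} (F : ℕ → ℝ) (hF0 : ∀ j, 0 ≤ F j)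
    (hFe : ∀ k, c ≤ F (2 * k)) (K : ℕ) :
    (K : ℝ) * c ≤ ∑ j ∈ Finset.range (2 * K), F j := by
  induction K with
  | zero => simp
  | succ K ih =>
    have h2 : 2 * (K + 1) = (2 * K) + 1 + 1 := by ring
    rw [h2, Finset.sum_range_succ, Finset.sum_range_succ]
    have := hFe K
    have := hF0 (2 * K + 1)
    push_cast
    linarith

/-- the martingale differences are eventually uniformly small. -/
lemma dist_cauchy (hpos : ∀ (ω : BinSeq) (t : ℕ), 0 < P (cyl ω t))
    (hO : ∀ S, MeasurableSet S → S ∈ A.sets)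
    (hmodP : ∀ α > (0:ℝ), ∃ δ > (0:ℝ), ∀ (t : ℕ) (W : Finset (V t)),
      (P (cylSet W)).toReal < δ → Q'.m (cylSet W) < α) :
    ∀ η > (0:ℝ), ∃ T : ℕ, ∀ t, T ≤ t → ∀ s, t ≤ s → Dist P Q' t s < η := by
  by_contra hcon
  push_neg at hcon
  obtain ⟨η, hη, hcon⟩ := hcon
  set α := η / 8 with hα
  have hαpos : 0 < α := by rw [hα]; linarith
  obtain ⟨l, hl1, hTail⟩ := UI P Q' hpos hO hmodP hαpos
  have hlpos : 0 < l := by linarith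
  have hl0 : 0 ≤ l := le_of_lt hlpos
  -- choose the bad pairs
  choose tf htf sf hsf hDf using hcon
  -- iterate
  set κ : ℕ → ℕ := fun k => Nat.rec 0 (fun _ prev => sf prev) k with hκ
  have hκs : ∀ k, κ (k + 1) = sf (κ k) := fun k => rfl
  -- the time sequence
  set v : ℕ → ℕ := fun j => if j % 2 = 0 then tf (κ (j / 2)) else sf (κ (j / 2)) with hv
  have hv_ev : ∀ k, v (2 * k) = tf (κ k) := by
    intro k
    have h1 : (2 * k) % 2 = 0 := by omega
    have h2 : 2 * k / 2 = k := by omega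
    rw [hv]
    simp [h1, h2]
  have hv_od : ∀ k, v (2 * k + 1) = sf (κ k) := by
    intro k
    have h1 : (2 * k + 1) % 2 = 1 := by omega
    have h2 : (2 * k + 1) / 2 = k := by omega
    rw [hv]
    simp [h1, h2]
  have hvmono : ∀ j, v j ≤ v (j + 1) := by
    intro j
    rcases Nat.even_or_odd j with ⟨m, hm⟩ | ⟨m, hm⟩
    · have hj : j = 2 * m := by omega
      subst hj
      rw [hv_ev, show 2 * m + 1 = 2 * m + 1 from rfl, hv_od]
      exact hsf (κ m)
    · have hj : j = 2 * m + 1 := by omega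
      subst hj
      rw [hv_od, show 2 * m + 1 + 1 = 2 * (m + 1) from by ring, hv_ev, hκs]
      exact htf (sf (κ m))
  have hvle : ∀ j j', j ≤ j' → v j ≤ v j' := fun j j' h =>
    monotone_nat_of_le_succ hvmono h
  -- one-step quantities
  set G : ℕ → ℝ := fun j => Eg P (v j) (fun w => (gr P Q' l (v j) w) ^ 2) with hG
  set H : ℕ → ℝ := fun j => Eg P (v j) (gr P Q' l (v j)) with hH
  set F : ℕ → ℝ := fun j => (G (j + 1) - G j) + 2 * l * (H j - H (j + 1)) with hF
  have hstep : ∀ j, ∑ w : V (v (j+1)), pr P (v (j+1)) w *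
      (gr P Q' l (v (j+1)) w - gr P Q' l (v j) (projT (v j) (v (j+1)) w)) ^ 2 ≤ F j :=
    fun j => sq_ineq P Q' hpos hO hl0 (hvmono j)
  have hF0 : ∀ j, 0 ≤ F j := by
    intro j
    refine le_trans ?_ (hstep j)
    exact Finset.sum_nonneg fun w _ => mul_nonneg (pr_nonneg P _ w) (sq_nonneg _)
  set c : ℝ := (3 * η / 4) ^ 2 with hc
  have hcpos : 0 < c := by positivity
  have hFe : ∀ k, c ≤ F (2 * k) := by
    intro k
    have he1 := hv_ev k
    have he2 := hv_od k
    have ht2 : v (2 * k) ≤ v (2 * k + 1) := hvmono (2 * k)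
    -- E|Δg| is at least 3η/4
    have hEd : 3 * η / 4 ≤ ∑ w : V (v (2*k+1)), pr P (v (2*k+1)) w *
        |gr P Q' l (v (2*k+1)) w - gr P Q' l (v (2*k)) (projT (v (2*k)) (v (2*k+1)) w)| := by
      have hD := hDf (κ k)
      have hDist : η ≤ Dist P Q' (v (2*k)) (v (2*k+1)) := by
        rw [he1, he2]; exact hD
      have htr := Dist_le_trunc P Q' hpos l ht2
      have hT1 := hTail (v (2*k))
      have hT2 := hTail (v (2*k+1))
      rw [hα] at hT1 hT2
      linarith
    have hEd0 : (0:ℝ) ≤ 3 * η / 4 := by linarith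
    have hcs := weighted_cs P (v (2*k+1)) (fun w =>
      gr P Q' l (v (2*k+1)) w - gr P Q' l (v (2*k)) (projT (v (2*k)) (v (2*k+1)) w))
    have hsq : c ≤ (∑ w : V (v (2*k+1)), pr P (v (2*k+1)) w *
        |gr P Q' l (v (2*k+1)) w - gr P Q' l (v (2*k)) (projT (v (2*k)) (v (2*k+1)) w)|) ^ 2 := by
      rw [hc]
      exact pow_le_pow_left₀ hEd0 hEd 2
    calc c ≤ _ := hsq
      _ ≤ ∑ w : V (v (2*k+1)), pr P (v (2*k+1)) w *
          (gr P Q' l (v (2*k+1)) w - gr P Q' l (v (2*k)) (projT (v (2*k)) (v (2*k+1)) w)) ^ 2 :=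
        hcs
      _ ≤ F (2 * k) := hstep (2 * k)
  -- telescoping bound
  have hupper : ∀ K : ℕ, ∑ j ∈ Finset.range K, F j ≤ l ^ 2 + 2 * l * α := by
    intro K
    have htel : ∑ j ∈ Finset.range K, F j = (G K - G 0) + 2 * l * (H 0 - H K) := by
      rw [hF]
      rw [Finset.sum_add_distrib, Finset.sum_range_sub (fun j => G j), ← Finset.mul_sum,
        Finset.sum_range_sub' (fun j => H j)]
    rw [htel]
    have h1 : G K ≤ l ^ 2 := Eg_sq_le P Q' hpos hO hl0 (v K)
    have h2 : 0 ≤ G 0 := Eg_sq_nonneg P (v 0) _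
    have h3 : H 0 ≤ 1 := Eg_gr_le_one P Q' hpos hO l (v 0)
    have h4 : 1 - α ≤ H K := by
      rw [hH]
      simp only []
      rw [Eg_gr_eq P Q' hpos hO l (v K)]
      have := hTail (v K)
      linarith
    have hla : 0 ≤ 2 * l * (H 0 - H K) → True := fun _ => trivial
    nlinarith
  -- contradiction
  obtain ⟨K, hK⟩ := exists_nat_gt ((l ^ 2 + 2 * l * α) / c)
  have hlow := sum_even_lower F hF0 hFe K
  have hup := hupper (2 * K)
  have : (K : ℝ) * c > l ^ 2 + 2 * l * α := by
    rw [gt_iff_lt, ← div_lt_iff₀ hcpos]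
    exact hK
  linarith

end Cauchy
end BD
namespace BD
open Classical Set MeasureTheory

section MergeMain

variable {A : SetAlgebra BinSeq}
variable {P : Measure BinSeq} [IsProbabilityMeasure P] {D : Set BinSeq}

/-- package a full piece as a finitely additive probability on `A` -/
noncomputable def qFA (A : SetAlgebra BinSeq) (q : Piece P D) (hfull : q.c = Set.univ) :
    FA A where
  m := q.m
  nonneg := fun S _ => q.hnonneg S (by rw [hfull]; trivial)
  total := q.htotal
  add := fun S _ T _ hd => q.hadd S (by rw [hfull]; trivial) T (by rw [hfull]; trivial) hd

variable (q : Piece P D) (hfull : q.c = Set.univ)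

lemma q_mem_all (hf : q.c = Set.univ) (S : Set BinSeq) : S ∈ q.c := by rw [hf]; trivial

lemma q_cylSet (_hf : q.c = Set.univ) (t : ℕ) (W : Finset (V t)) :
    q.m (cylSet W) = (P (cylSet W)).toReal :=
  (q.hcalg _ ⟨t, W, rfl⟩).2

lemma q_cylV (_hf : q.c = Set.univ) (t : ℕ) (v : V t) : q.m (cylV v) = pr P t v :=
  (q.hcalg _ (calg_cylV v)).2

/-- the ε-δ modulus of absolute continuity -/
lemma modulus (Q' : FA A) (habs : AbsCont (qFA A q hfull) Q') :
    ∀ α > (0:ℝ), ∃ δ > (0:ℝ), ∀ S ∈ A.sets, q.m S < δ → Q'.m S < α := by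
  by_contra hcon
  push_neg at hcon
  obtain ⟨α, hα, hcon⟩ := hcon
  have hchoice : ∀ n : ℕ, ∃ S, S ∈ A.sets ∧ q.m S < 1 / (n + 1) ∧ α ≤ Q'.m S := by
    intro n
    obtain ⟨S, hS1, hS2, hS3⟩ := hcon (1 / (n + 1)) (by positivity)
    exact ⟨S, hS1, hS2, hS3⟩
  choose Ef hEf1 hEf2 hEf3 using hchoice
  have htend : Tendsto (fun n => (qFA A q hfull).m (Ef n)) atTop (𝓝 0) := by
    apply squeeze_zero (fun n => q.hnonneg _ (q_mem_all q hfull _))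
      (fun n => le_of_lt (hEf2 n))
    exact tendsto_one_div_add_atTop_nhds_zero_nat
  have hQtend := habs Ef hEf1 htend
  obtain ⟨N, hN⟩ := (Metric.tendsto_atTop.1 hQtend) α hα
  have h1 := hN N (le_refl N)
  rw [Real.dist_eq, sub_zero] at h1
  have h2 := hEf3 N
  have := le_abs_self (Q'.m (Ef N))
  linarith

/-- the cylinder-set modulus -/
lemma modulusP (Q' : FA A) (hO : ∀ S, MeasurableSet S → S ∈ A.sets)
    (habs : AbsCont (qFA A q hfull) Q') :
    ∀ α > (0:ℝ), ∃ δ > (0:ℝ), ∀ (t : ℕ) (W : Finset (V t)),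
      (P (cylSet W)).toReal < δ → Q'.m (cylSet W) < α := by
  intro α hα
  obtain ⟨δ, hδ, hmod⟩ := modulus q hfull Q' habs α hα
  refine ⟨δ, hδ, fun t W hP => ?_⟩
  apply hmod _ (hO _ (measurableSet_cylSet W))
  rw [q_cylSet q hfull]
  exact hP

/-- the per-cylinder estimate for the classical (cylinder-algebra) bad set -/
lemma B3_estimate (Q' : FA A) (hO : ∀ S, MeasurableSet S → S ∈ A.sets)
    (hpos : ∀ (ω : BinSeq) (t : ℕ), 0 < P (cyl ω t))
    {ε3 : ℝ} (hε3 : 0 < ε3) {t : ℕ} (v : V t) {Fc : Set BinSeq} (hFc : CAlg Fc)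
    (hbad : ε3 ≤ |(qFA A q hfull).cond Fc (cylV v) - Q'.cond Fc (cylV v)|) :
    ∃ u, t ≤ u ∧ ε3 * qr Q' t v ≤ LocD P Q' t u v := by
  obtain ⟨u0, W0, rfl⟩ := hFc
  set u := max u0 t with hu
  have hu0 : u0 ≤ u := le_max_left _ _
  have htu : t ≤ u := le_max_right _ _
  refine ⟨u, htu, ?_⟩
  rcases eq_or_lt_of_le (qr_nonneg Q' hO t v) with hq0 | hqpos
  · rw [← hq0, mul_zero]
    exact Finset.sum_nonneg fun w _ => abs_nonneg _
  -- lift to level u and restrict to the fiber of v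
  set W : Finset (V u) := Finset.univ.filter (fun w : V u => proj hu0 w ∈ W0) with hW
  have hWeq : cylSet W0 = cylSet W := cylSet_lift hu0 W0
  set Wv : Finset (V u) := W.filter (fun w => projT t u w = v) with hWv
  have hinter : cylSet W0 ∩ cylV v = cylSet Wv := by
    rw [hWeq]
    ext ω
    simp only [Set.mem_inter_iff, mem_cylSet, mem_cylV, hWv, Finset.mem_filter]
    rw [← projT_pre htu ω]
  -- express the conditional probabilities as sums
  have hqm : q.m (cylSet W0 ∩ cylV v) = ∑ w ∈ Wv, pr P u w := by
    rw [hinter, q_cylSet q hfull, P_cylSet_sum]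
    rfl
  have hq'm : Q'.m (cylSet W0 ∩ cylV v) = ∑ w ∈ Wv, qr Q' u w := by
    rw [hinter]
    exact (faAlg Q').m_cylSet_sum (fun S hS => hO S hS) Wv
  have hqc : q.m (cylV v) = pr P t v := q_cylV q hfull t v
  set Aa := ∑ w ∈ Wv, pr P u w with hAa
  set Bb := ∑ w ∈ Wv, qr Q' u w with hBb
  have hcond1 : (qFA A q hfull).cond (cylSet W0) (cylV v) = Aa / pr P t v := by
    rw [FA.cond]
    show q.m _ / q.m _ = _
    rw [hqm, hqc]
  have hcond2 : Q'.cond (cylSet W0) (cylV v) = Bb / qr Q' t v := by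
    rw [FA.cond, hq'm]
    rfl
  rw [hcond1, hcond2] at hbad
  -- multiply through by qr t v > 0
  have hkey : ε3 * qr Q' t v ≤ |fr P Q' t v * Aa - Bb| := by
    have hqne : qr Q' t v ≠ 0 := ne_of_gt hqpos
    have hpne : pr P t v ≠ 0 := ne_of_gt (pr_pos P hpos t v)
    have inner : qr Q' t v * (Aa / pr P t v - Bb / qr Q' t v) = fr P Q' t v * Aa - Bb := by
      rw [fr]
      field_simp
    have h1 : |qr Q' t v * (Aa / pr P t v - Bb / qr Q' t v)|
        = qr Q' t v * |Aa / pr P t v - Bb / qr Q' t v| := by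
      rw [abs_mul, abs_of_pos hqpos]
    calc ε3 * qr Q' t v = qr Q' t v * ε3 := by ring
      _ ≤ qr Q' t v * |Aa / pr P t v - Bb / qr Q' t v| :=
          mul_le_mul_of_nonneg_left hbad (le_of_lt hqpos)
      _ = |qr Q' t v * (Aa / pr P t v - Bb / qr Q' t v)| := h1.symm
      _ = _ := by rw [inner]
  calc ε3 * qr Q' t v ≤ |fr P Q' t v * Aa - Bb| := hkey
    _ = |∑ w ∈ Wv, (fr P Q' t v * pr P u w - qr Q' u w)| := by
        rw [Finset.sum_sub_distrib, ← Finset.mul_sum]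
    _ ≤ ∑ w ∈ Wv, |fr P Q' t v * pr P u w - qr Q' u w| := Finset.abs_sum_le_sum_abs _ _
    _ = ∑ w ∈ Wv, |qr Q' u w - fr P Q' t v * pr P u w| := by
        apply Finset.sum_congr rfl
        intro w _
        rw [abs_sub_comm]
    _ ≤ LocD P Q' t u v := by
        rw [LocD]
        apply Finset.sum_le_sum_of_subset_of_nonneg
        · intro w hw
          rw [hWv, Finset.mem_filter] at hw
          rw [Finset.mem_filter]
          exact ⟨Finset.mem_univ _, hw.2⟩
        · intro w _ _
          exact abs_nonneg _

end MergeMain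
end BD
namespace BD
open Classical Set MeasureTheory

section BDMain

variable {A : SetAlgebra BinSeq}
variable {P : Measure BinSeq} [IsProbabilityMeasure P] {D : Set BinSeq}

theorem bd_of_full (q : Piece P D) (hfull : q.c = Set.univ)
    (hO : ∀ S, MeasurableSet S → S ∈ A.sets)
    (hpos : ∀ (ω : BinSeq) (t : ℕ), 0 < P (cyl ω t)) :
    BDProp (qFA A q hfull) := by
  intro Q' habs
  intro ε hε
  set ε3 := ε / 3 with hε3def
  have hε3 : 0 < ε3 := by rw [hε3def]; linarith
  have hmodA := modulus q hfull Q' habs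
  have hmodP := modulusP q hfull Q' hO habs
  have hC := dist_cauchy P Q' hpos hO hmodP
  rw [Metric.tendsto_atTop]
  intro α hα
  have hα4 : 0 < α / 4 := by linarith
  obtain ⟨δ4, hδ4, hmod4⟩ := hmodA (α / 4) hα4
  obtain ⟨T, hT⟩ := hC (ε3 * (α / 4)) (by positivity)
  refine ⟨T, fun t ht => ?_⟩
  set N : ℝ := (Fintype.card (V t) : ℝ) + 1 with hN
  have hNpos : 0 < N := by positivity
  have hcardN : (Fintype.card (V t) : ℝ) < N := by rw [hN]; linarith
  set γ : ℝ := ε3 * (α / 4) / N with hγ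
  have hγpos : 0 < γ := by positivity
  obtain ⟨δγ, hδγ, hmodγ⟩ := hmodA γ hγpos
  set εv : ℝ := min (ε3 * δ4 / N) δγ with hεv
  have hεvpos : 0 < εv := lt_min (by positivity) hδγ
  -- the bad prefixes
  set bt : V t → Prop := fun v =>
    ∃ E ∈ A.sets, ε < |(qFA A q hfull).cond E (cylV v) - Q'.cond E (cylV v)| with hbt
  -- witnesses
  have hwit : ∀ v : V t, ∃ EFp : Set BinSeq × Set BinSeq,
      EFp.1 ∈ A.sets ∧ CAlg EFp.2 ∧ q.m (symmDiff EFp.1 EFp.2) < εv ∧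
      (bt v → ε < |(qFA A q hfull).cond EFp.1 (cylV v) - Q'.cond EFp.1 (cylV v)|) := by
    intro v
    by_cases h : bt v
    · obtain ⟨E, hE, hlt⟩ := h
      obtain ⟨F, hF, hsm⟩ := q.hdens E (q_mem_all q hfull E) εv hεvpos
      exact ⟨(E, F), hE, hF, hsm, fun _ => hlt⟩
    · refine ⟨(∅, ∅), ?_, CAlg.empty, ?_, fun hb => absurd hb h⟩
      · have := A.compl_mem _ A.univ_mem
        simpa using this
      · rw [symmDiff_self]
        show q.m ∅ < εv
        rw [q.toAlg.m_empty]
        exact hεvpos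
  choose EF hEF1 hEF2 hEF3 hEF4 using hwit
  -- the three groups
  set G1 : Finset (V t) := Finset.univ.filter
    (fun v => ε3 * pr P t v < q.m (symmDiff (EF v).1 (EF v).2 ∩ cylV v)) with hG1
  set G2 : Finset (V t) := Finset.univ.filter
    (fun v => ε3 * qr Q' t v < Q'.m (symmDiff (EF v).1 (EF v).2 ∩ cylV v)) with hG2
  set B3 : Finset (V t) := Finset.univ.filter
    (fun v => ∃ Fc, CAlg Fc ∧
      ε3 ≤ |(qFA A q hfull).cond Fc (cylV v) - Q'.cond Fc (cylV v)|) with hB3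
  -- coverage
  have hcov : ∀ v : V t, bt v → v ∈ G1 ∨ v ∈ G2 ∨ v ∈ B3 := by
    intro v hb
    by_cases h1 : v ∈ G1
    · exact Or.inl h1
    by_cases h2 : v ∈ G2
    · exact Or.inr (Or.inl h2)
    refine Or.inr (Or.inr ?_)
    have hlt := hEF4 v hb
    have hEA := hEF1 v
    have hFcalg := hEF2 v
    have hFA : (EF v).2 ∈ A.sets := hO _ hFcalg.measurableSet
    have hCA : cylV v ∈ A.sets := hO _ (measurableSet_cylV v)
    have hppos := pr_pos P hpos t v
    have hqC : q.m (cylV v) = pr P t v := q_cylV q hfull t v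
    have hss : symmDiff ((EF v).1 ∩ cylV v) ((EF v).2 ∩ cylV v)
        ⊆ symmDiff (EF v).1 (EF v).2 ∩ cylV v := by
      intro x hx
      rw [Set.mem_symmDiff] at hx
      rw [Set.mem_inter_iff, Set.mem_symmDiff]
      rcases hx with ⟨⟨h1', h2'⟩, h3'⟩ | ⟨⟨h1', h2'⟩, h3'⟩
      · exact ⟨Or.inl ⟨h1', fun hF' => h3' ⟨hF', h2'⟩⟩, h2'⟩
      · exact ⟨Or.inr ⟨h1', fun hE' => h3' ⟨hE', h2'⟩⟩, h2'⟩
    -- the q-side conditional bound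
    have hb2 : |(qFA A q hfull).cond (EF v).1 (cylV v)
        - (qFA A q hfull).cond (EF v).2 (cylV v)| ≤ ε3 := by
      have hnum : |q.m ((EF v).1 ∩ cylV v) - q.m ((EF v).2 ∩ cylV v)|
          ≤ q.m (symmDiff (EF v).1 (EF v).2 ∩ cylV v) := by
        calc |q.m ((EF v).1 ∩ cylV v) - q.m ((EF v).2 ∩ cylV v)|
            ≤ q.m (symmDiff ((EF v).1 ∩ cylV v) ((EF v).2 ∩ cylV v)) :=
              q.toAlg.abs_m_sub_le (q_mem_all q hfull _) (q_mem_all q hfull _)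
          _ ≤ q.m (symmDiff (EF v).1 (EF v).2 ∩ cylV v) :=
              q.toAlg.m_mono (q_mem_all q hfull _) (q_mem_all q hfull _) hss
      have hG1' : q.m (symmDiff (EF v).1 (EF v).2 ∩ cylV v) ≤ ε3 * pr P t v := by
        rw [hG1, Finset.mem_filter] at h1
        push_neg at h1
        exact h1 (Finset.mem_univ v)
      show |q.m ((EF v).1 ∩ cylV v) / q.m (cylV v)
        - q.m ((EF v).2 ∩ cylV v) / q.m (cylV v)| ≤ ε3
      rw [div_sub_div_same, abs_div, hqC, abs_of_pos hppos, div_le_iff₀ hppos]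
      exact le_trans hnum hG1'
    -- the Q'-side conditional bound
    have hb3 : |Q'.cond (EF v).1 (cylV v) - Q'.cond (EF v).2 (cylV v)| ≤ ε3 := by
      rcases eq_or_lt_of_le (qr_nonneg Q' hO t v) with hq0 | hqpos
      · show |Q'.m ((EF v).1 ∩ cylV v) / Q'.m (cylV v)
          - Q'.m ((EF v).2 ∩ cylV v) / Q'.m (cylV v)| ≤ ε3
        have hz : Q'.m (cylV v) = 0 := hq0.symm
        rw [hz, div_zero, div_zero, sub_zero, abs_zero]
        exact le_of_lt hε3
      · have m1 : (EF v).1 ∩ cylV v ∈ A.sets := (faAlg Q').hinter hEA hCA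
        have m2 : (EF v).2 ∩ cylV v ∈ A.sets := (faAlg Q').hinter hFA hCA
        have m3 : symmDiff (EF v).1 (EF v).2 ∩ cylV v ∈ A.sets :=
          (faAlg Q').hinter ((faAlg Q').hsymmDiff hEA hFA) hCA
        have hnum : |Q'.m ((EF v).1 ∩ cylV v) - Q'.m ((EF v).2 ∩ cylV v)|
            ≤ Q'.m (symmDiff (EF v).1 (EF v).2 ∩ cylV v) := by
          calc |Q'.m ((EF v).1 ∩ cylV v) - Q'.m ((EF v).2 ∩ cylV v)|
              ≤ Q'.m (symmDiff ((EF v).1 ∩ cylV v) ((EF v).2 ∩ cylV v)) :=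
                (faAlg Q').abs_m_sub_le m1 m2
            _ ≤ Q'.m (symmDiff (EF v).1 (EF v).2 ∩ cylV v) :=
                (faAlg Q').m_mono ((faAlg Q').hsymmDiff m1 m2) m3 hss
        have hG2' : Q'.m (symmDiff (EF v).1 (EF v).2 ∩ cylV v) ≤ ε3 * qr Q' t v := by
          rw [hG2, Finset.mem_filter] at h2
          push_neg at h2
          exact h2 (Finset.mem_univ v)
        show |Q'.m ((EF v).1 ∩ cylV v) / Q'.m (cylV v)
          - Q'.m ((EF v).2 ∩ cylV v) / Q'.m (cylV v)| ≤ ε3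
        rw [div_sub_div_same, abs_div]
        have hqr : Q'.m (cylV v) = qr Q' t v := rfl
        rw [hqr, abs_of_pos hqpos, div_le_iff₀ hqpos]
        exact le_trans hnum hG2'
    rw [hB3, Finset.mem_filter]
    refine ⟨Finset.mem_univ v, (EF v).2, hFcalg, ?_⟩
    set a := (qFA A q hfull).cond (EF v).1 (cylV v) - Q'.cond (EF v).1 (cylV v) with ha
    set b := (qFA A q hfull).cond (EF v).2 (cylV v) - Q'.cond (EF v).2 (cylV v) with hb'
    have hab : a - b = ((qFA A q hfull).cond (EF v).1 (cylV v)
        - (qFA A q hfull).cond (EF v).2 (cylV v))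
        - (Q'.cond (EF v).1 (cylV v) - Q'.cond (EF v).2 (cylV v)) := by
      rw [ha, hb']; ring
    have habss : |a - b| ≤ ε3 + ε3 := by
      rw [hab, sub_eq_add_neg]
      calc |_ + _| ≤ _ := abs_add_le _ _
        _ ≤ ε3 + ε3 := by rw [abs_neg]; exact add_le_add hb2 hb3
    have htri := abs_sub_abs_le_abs_sub a b
    have hee : ε3 = ε / 3 := hε3def
    have : ε < |a| := hlt
    linarith
  -- bound for G1
  have hG1small : Q'.m (cylSet G1) < α / 4 := by
    apply hmod4 _ (hO _ (measurableSet_cylSet G1))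
    rw [q_cylSet q hfull, P_cylSet_sum]
    have hper : ∀ v ∈ G1, (P (cylV v)).toReal ≤ δ4 / N := by
      intro v hv
      rw [hG1, Finset.mem_filter] at hv
      have hsd : q.m (symmDiff (EF v).1 (EF v).2 ∩ cylV v) < εv :=
        lt_of_le_of_lt (q.toAlg.m_mono (q_mem_all q hfull _) (q_mem_all q hfull _)
          Set.inter_subset_left) (hEF3 v)
      have : ε3 * pr P t v < ε3 * δ4 / N :=
        lt_of_lt_of_le (lt_trans hv.2 hsd) (min_le_left _ _)
      have h' : ε3 * pr P t v < ε3 * (δ4 / N) := by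
        calc ε3 * pr P t v < ε3 * δ4 / N := this
          _ = ε3 * (δ4 / N) := by ring
      exact le_of_lt (lt_of_mul_lt_mul_left h' (le_of_lt hε3))
    calc ∑ v ∈ G1, (P (cylV v)).toReal ≤ G1.card • (δ4 / N) :=
          Finset.sum_le_card_nsmul G1 _ _ hper
      _ = (G1.card : ℝ) * (δ4 / N) := by rw [nsmul_eq_mul]
      _ ≤ (Fintype.card (V t) : ℝ) * (δ4 / N) := by
          apply mul_le_mul_of_nonneg_right _ (by positivity)
          exact_mod_cast Finset.card_le_univ G1
      _ < N * (δ4 / N) := by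
          apply mul_lt_mul_of_pos_right hcardN (by positivity)
      _ = δ4 := by field_simp
  -- bound for G2
  have hG2small : Q'.m (cylSet G2) ≤ α / 4 := by
    have hval : Q'.m (cylSet G2) = ∑ v ∈ G2, qr Q' t v :=
      (faAlg Q').m_cylSet_sum (fun S hS => hO S hS) G2
    rw [hval]
    have hper : ∀ v ∈ G2, qr Q' t v ≤ (α / 4) / N := by
      intro v hv
      rw [hG2, Finset.mem_filter] at hv
      have hsdA : symmDiff (EF v).1 (EF v).2 ∈ A.sets :=
        (faAlg Q').hsymmDiff (hEF1 v) (hO _ (hEF2 v).measurableSet)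
      have hq'sd : Q'.m (symmDiff (EF v).1 (EF v).2) < γ := by
        apply hmodγ _ hsdA
        exact lt_of_lt_of_le (hEF3 v) (min_le_right _ _)
      have hmono : Q'.m (symmDiff (EF v).1 (EF v).2 ∩ cylV v)
          ≤ Q'.m (symmDiff (EF v).1 (EF v).2) :=
        (faAlg Q').m_mono ((faAlg Q').hinter hsdA (hO _ (measurableSet_cylV v))) hsdA
          Set.inter_subset_left
      have : ε3 * qr Q' t v < γ := lt_of_lt_of_le hv.2 (le_trans hmono (le_of_lt hq'sd))
      have h' : ε3 * qr Q' t v < ε3 * ((α / 4) / N) := by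
        calc ε3 * qr Q' t v < γ := this
          _ = ε3 * ((α / 4) / N) := by rw [hγ]; ring
      exact le_of_lt (lt_of_mul_lt_mul_left h' (le_of_lt hε3))
    calc ∑ v ∈ G2, qr Q' t v ≤ G2.card • ((α / 4) / N) :=
          Finset.sum_le_card_nsmul G2 _ _ hper
      _ = (G2.card : ℝ) * ((α / 4) / N) := by rw [nsmul_eq_mul]
      _ ≤ (Fintype.card (V t) : ℝ) * ((α / 4) / N) := by
          apply mul_le_mul_of_nonneg_right _ (by positivity)
          exact_mod_cast Finset.card_le_univ G2
      _ ≤ N * ((α / 4) / N) := by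
          apply mul_le_mul_of_nonneg_right (le_of_lt hcardN) (by positivity)
      _ = α / 4 := by field_simp
  -- bound for B3
  have hB3small : Q'.m (cylSet B3) ≤ α / 4 := by
    have hval : Q'.m (cylSet B3) = ∑ v ∈ B3, qr Q' t v :=
      (faAlg Q').m_cylSet_sum (fun S hS => hO S hS) B3
    have hwit3 : ∀ v : V t, ∃ u, t ≤ u ∧
        (v ∈ B3 → ε3 * qr Q' t v ≤ LocD P Q' t u v) := by
      intro v
      by_cases hv : v ∈ B3
      · rw [hB3, Finset.mem_filter] at hv
        obtain ⟨_, Fc, hFc, hbad⟩ := hv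
        obtain ⟨u, hu, hloc⟩ := B3_estimate q hfull Q' hO hpos hε3 v hFc hbad
        exact ⟨u, hu, fun _ => hloc⟩
      · exact ⟨t, le_refl t, fun h => absurd h hv⟩
    choose uf huf1 huf2 using hwit3
    set s' : ℕ := max t (Finset.univ.sup uf) with hs'
    have hts' : t ≤ s' := le_max_left _ _
    have hufs' : ∀ v, uf v ≤ s' :=
      fun v => le_trans (Finset.le_sup (Finset.mem_univ v)) (le_max_right _ _)
    have hsum : ε3 * ∑ v ∈ B3, qr Q' t v ≤ Dist P Q' t s' := by
      rw [Finset.mul_sum]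
      calc ∑ v ∈ B3, ε3 * qr Q' t v ≤ ∑ v ∈ B3, LocD P Q' t s' v := by
            apply Finset.sum_le_sum
            intro v hv
            exact le_trans (huf2 v hv) (LocD_mono P Q' hpos hO (huf1 v) (hufs' v) v)
        _ ≤ ∑ v : V t, LocD P Q' t s' v := by
            apply Finset.sum_le_sum_of_subset_of_nonneg (Finset.subset_univ B3)
            intro v _ _
            exact Finset.sum_nonneg fun w _ => abs_nonneg _
        _ = Dist P Q' t s' := (Dist_eq_sum_LocD P Q' hts').symm
    have hdist := hT t ht s' hts'
    rw [hval]
    have : ε3 * ∑ v ∈ B3, qr Q' t v < ε3 * (α / 4) := lt_of_le_of_lt hsum hdist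
    exact le_of_lt (lt_of_mul_lt_mul_left this (le_of_lt hε3))
  -- assemble
  have hSbeq : {ω : BinSeq | ∃ E ∈ A.sets,
      ε < |(qFA A q hfull).cond E (cyl ω t) - Q'.cond E (cyl ω t)|}
      = cylSet (Finset.univ.filter bt) := by
    ext ω
    rw [mem_cylSet, Finset.mem_filter]
    simp only [Set.mem_setOf_eq, cyl_eq_cylV ω t]
    exact ⟨fun h => ⟨Finset.mem_univ _, h⟩, fun h => h.2⟩
  have hsubset : cylSet (Finset.univ.filter bt) ⊆ cylSet (G1 ∪ G2 ∪ B3) := by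
    intro ω hω
    rw [mem_cylSet, Finset.mem_filter] at hω
    rw [mem_cylSet, Finset.mem_union, Finset.mem_union]
    rcases hcov _ hω.2 with h | h | h
    · exact Or.inl (Or.inl h)
    · exact Or.inl (Or.inr h)
    · exact Or.inr h
  have hmain : Q'.m {ω : BinSeq | ∃ E ∈ A.sets,
      ε < |(qFA A q hfull).cond E (cyl ω t) - Q'.cond E (cyl ω t)|} < α := by
    rw [hSbeq]
    have hm1 : Q'.m (cylSet (Finset.univ.filter bt)) ≤ Q'.m (cylSet (G1 ∪ G2 ∪ B3)) :=
      (faAlg Q').m_mono (hO _ (measurableSet_cylSet _)) (hO _ (measurableSet_cylSet _))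
        hsubset
    have hsplit : Q'.m (cylSet (G1 ∪ G2 ∪ B3))
        ≤ Q'.m (cylSet G1) + Q'.m (cylSet G2) + Q'.m (cylSet B3) := by
      have e1 : cylSet (G1 ∪ G2 ∪ B3) = cylSet G1 ∪ cylSet G2 ∪ cylSet B3 := by
        rw [cylSet_union, cylSet_union]
      rw [e1]
      calc Q'.m (cylSet G1 ∪ cylSet G2 ∪ cylSet B3)
          ≤ Q'.m (cylSet G1 ∪ cylSet G2) + Q'.m (cylSet B3) :=
            (faAlg Q').m_union_le ((faAlg Q').hunion _ (hO _ (measurableSet_cylSet _)) _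
              (hO _ (measurableSet_cylSet _))) (hO _ (measurableSet_cylSet _))
        _ ≤ Q'.m (cylSet G1) + Q'.m (cylSet G2) + Q'.m (cylSet B3) := by
            have h2 : Q'.m (cylSet G1 ∪ cylSet G2) ≤ Q'.m (cylSet G1) + Q'.m (cylSet G2) :=
              (faAlg Q').m_union_le (hO _ (measurableSet_cylSet G1))
                (hO _ (measurableSet_cylSet G2))
            linarith
    linarith
  rw [Real.dist_eq, sub_zero]
  rw [abs_of_nonneg]
  · exact hmain
  · apply Q'.nonneg
    rw [hSbeq]
    exact hO _ (measurableSet_cylSet _)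

end BDMain
end BD
namespace BD
open Classical Set MeasureTheory

section DenseFamily

variable (P : Measure BinSeq) [IsProbabilityMeasure P]

/-- the set of atoms of `P` -/
def At (P : Measure BinSeq) : Set BinSeq := {x | 0 < P {x}}

lemma At_countable : (At P).Countable := by
  apply Measure.countable_meas_pos_of_disjoint_iUnion
    (As := fun x : BinSeq => ({x} : Set BinSeq))
  · exact fun x => measurableSet_singleton_binseq x
  · intro x y hxy
    simp only [Function.onFun]
    rw [Set.disjoint_left]
    intro z hz1 hz2
    rw [Set.mem_singleton_iff] at hz1 hz2
    exact hxy (hz1 ▸ hz2)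

/-- the point associated to index `r`, prefix `v` and free data `z` -/
def dpt (r : BinSeq) (t : ℕ) (v : V t) (z : BinSeq) : BinSeq := fun n =>
  if h : n < t then v ⟨n, h⟩
  else if n % 3 = 0 then r (Nat.unpair (n / 3)).1
  else if n % 3 = 1 then z ((n - 1) / 3)
  else false

lemma dpt_mem_cylV (r : BinSeq) (t : ℕ) (v : V t) (z : BinSeq) : dpt r t v z ∈ cylV v := by
  rw [mem_cylV]
  funext i
  show dpt r t v z (i : ℕ) = v i
  rw [dpt, dif_pos i.isLt]

lemma binseq_uncountable : ¬ (Countable BinSeq) := by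
  intro h
  have h1 : (Cardinal.mk BinSeq) ≤ Cardinal.aleph0 := Cardinal.mk_le_aleph0
  have h2 : (Cardinal.mk BinSeq) = 2 ^ Cardinal.aleph0 := by
    rw [← Cardinal.mk_nat, ← Cardinal.mk_bool, Cardinal.power_def]
  have := Cardinal.cantor Cardinal.aleph0
  rw [← h2] at this
  exact absurd h1 (not_le.2 this)

/-- choose the free data so as to avoid the atoms -/
lemma exists_dpt_nonatom (r : BinSeq) (t : ℕ) (v : V t) :
    ∃ z, dpt r t v z ∉ At P := by
  by_contra hcon
  push_neg at hcon
  set f : BinSeq → BinSeq := fun y =>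
    dpt r t v (fun k => if t ≤ k then y (k - t) else false) with hf
  have hinj : Function.Injective f := by
    intro y y' hyy
    funext j
    have hn := congrFun hyy (3 * (j + t) + 1)
    have h1 : ¬ (3 * (j + t) + 1 < t) := by omega
    have h2 : ¬ ((3 * (j + t) + 1) % 3 = 0) := by omega
    have h3 : (3 * (j + t) + 1) % 3 = 1 := by omega
    have h4 : (3 * (j + t) + 1 - 1) / 3 = j + t := by omega
    rw [hf] at hn
    simp only [dpt, dif_neg h1, if_neg h2, if_pos h3, h4] at hn
    rw [if_pos (by omega : t ≤ j + t), if_pos (by omega : t ≤ j + t)] at hn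
    simpa using hn
  have hsub : Set.range f ⊆ At P := by
    rintro x ⟨y, rfl⟩
    exact hcon _
  have hrc : (Set.range f).Countable := (At_countable P).mono hsub
  have : (Set.univ : Set BinSeq).Countable := by
    have := hrc.preimage hinj
    rwa [Set.preimage_range] at this
  rw [Set.countable_univ_iff] at this
  exact binseq_uncountable this

/-- the free-data choice -/
noncomputable def zsel (r : BinSeq) (t : ℕ) (v : V t) : BinSeq :=
  (exists_dpt_nonatom P r t v).choose

lemma zsel_spec (r : BinSeq) (t : ℕ) (v : V t) : dpt r t v (zsel P r t v) ∉ At P :=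
  (exists_dpt_nonatom P r t v).choose_spec

/-- the countable dense set indexed by `r` -/
def dD (r : BinSeq) : Set BinSeq :=
  Set.range (fun s : (Σ t : ℕ, V t) => dpt r s.1 s.2 (zsel P r s.1 s.2))

lemma dD_dense (r : BinSeq) : DenseIn (dD P r) := by
  intro t v
  exact ⟨dpt r t v (zsel P r t v), dpt_mem_cylV r t v _, ⟨⟨t, v⟩, rfl⟩⟩

lemma dD_countable (r : BinSeq) : (dD P r).Countable := Set.countable_range _

lemma dD_nonempty (r : BinSeq) : (dD P r).Nonempty := ⟨_, ⟨⟨0, fun i => false⟩, rfl⟩⟩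

lemma dD_nonatom (r : BinSeq) {x : BinSeq} (hx : x ∈ dD P r) : P {x} = 0 := by
  obtain ⟨⟨t, v⟩, rfl⟩ := hx
  have := zsel_spec P r t v
  rw [At, Set.mem_setOf_eq] at this
  push_neg at this
  exact le_antisymm this (by simp)

/-- points of different families differ: the tail determines `r` -/
lemma dD_disjoint {r r' : BinSeq} (h : r ≠ r') (x : BinSeq)
    (hx : x ∈ dD P r) (hx' : x ∈ dD P r') : False := by
  obtain ⟨⟨t, v⟩, he⟩ := hx
  obtain ⟨⟨t', v'⟩, he'⟩ := hx'
  apply h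
  funext i
  set j := max t t' with hj
  set n := 3 * Nat.pair i j with hn
  have hjn : j ≤ Nat.pair i j := Nat.right_le_pair i j
  have h1 : ¬ (n < t) := by
    have : t ≤ j := le_max_left _ _
    omega
  have h1' : ¬ (n < t') := by
    have : t' ≤ j := le_max_right _ _
    omega
  have h2 : n % 3 = 0 := by omega
  have h3 : n / 3 = Nat.pair i j := by omega
  have hv1 : x n = r i := by
    rw [← he]
    show dpt r t v (zsel P r t v) n = r i
    rw [dpt, dif_neg h1, if_pos h2, h3, Nat.unpair_pair]
  have hv2 : x n = r' i := by
    rw [← he']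
    show dpt r' t' v' (zsel P r' t' v') n = r' i
    rw [dpt, dif_neg h1', if_pos h2, h3, Nat.unpair_pair]
  rw [hv1] at hv2
  exact hv2

end DenseFamily
end BD
namespace BD
open Classical Set MeasureTheory

section NotCA

variable {A : SetAlgebra BinSeq}
variable {P : Measure BinSeq} [IsProbabilityMeasure P] {D : Set BinSeq}

lemma cyl_antitone (x : BinSeq) : Antitone (fun t => cyl x t) := by
  intro s t hst ω hω i hi
  exact hω i (lt_of_lt_of_le hi hst)

lemma iInter_cyl (x : BinSeq) : ⋂ t, cyl x t = {x} := by
  ext ω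
  simp only [Set.mem_iInter, Set.mem_singleton_iff]
  constructor
  · intro h
    funext i
    exact h (i + 1) i (lt_add_one i)
  · rintro rfl t i _
    rfl

lemma measurableSet_cyl (x : BinSeq) (t : ℕ) : MeasurableSet (cyl x t) := by
  rw [cyl_eq_cylV]
  exact measurableSet_cylV _

lemma q_singleton_zero (q : Piece P D) (hfull : q.c = Set.univ) {x : BinSeq}
    (hx : P {x} = 0) : q.m {x} = 0 := by
  have hbound : ∀ t, q.m {x} ≤ (P (cyl x t)).toReal := by
    intro t
    have hsub : ({x} : Set BinSeq) ⊆ cyl x t := by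
      rintro ω rfl
      intro i _
      rfl
    have h1 : q.m {x} ≤ q.m (cyl x t) :=
      q.toAlg.m_mono (q_mem_all q hfull _) (q_mem_all q hfull _) hsub
    have h2 : q.m (cyl x t) = (P (cyl x t)).toReal := by
      rw [cyl_eq_cylV]
      rw [q_cylV q hfull]
      rfl
    rw [h2] at h1
    exact h1
  have htend : Tendsto (fun t => P (cyl x t)) atTop (𝓝 (P {x})) := by
    have h := tendsto_measure_iInter_atTop (μ := P) (s := fun t => cyl x t)
      (fun t => (measurableSet_cyl x t).nullMeasurableSet) (cyl_antitone x)
      ⟨0, measure_ne_top P _⟩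
    rwa [iInter_cyl] at h
  have htr : Tendsto (fun t => (P (cyl x t)).toReal) atTop (𝓝 ((P {x}).toReal)) :=
    (ENNReal.tendsto_toReal (by rw [hx]; exact ENNReal.zero_ne_top)).comp htend
  rw [hx, ENNReal.toReal_zero] at htr
  have hle : q.m {x} ≤ 0 := ge_of_tendsto' htr hbound
  exact le_antisymm hle (q.hnonneg _ (q_mem_all q hfull _))

lemma not_countablyAdditive (hO : ∀ S, MeasurableSet S → S ∈ A.sets) (r : BinSeq)
    (q : Piece P (dD P r)) (hfull : q.c = Set.univ) :
    ¬ CountablyAdditive (qFA A q hfull) := by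
  intro hCA
  obtain ⟨e, he⟩ := (dD_countable P r).exists_eq_range (dD_nonempty P r)
  set E : ℕ → Set BinSeq := fun n => {x | x = e n ∧ ∀ m, m < n → x ≠ e m} with hE
  have hEsub : ∀ n, E n ⊆ {e n} := by
    rintro n x ⟨hx, _⟩
    exact hx
  have hEmeas : ∀ n, MeasurableSet (E n) := by
    intro n
    have heq : E n = {e n} ∩ ⋂ (m : ℕ), ⋂ (_ : m < n), ({e m}ᶜ) := by
      ext x
      simp only [hE, Set.mem_setOf_eq, Set.mem_inter_iff, Set.mem_singleton_iff,
        Set.mem_iInter, Set.mem_compl_iff]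
    rw [heq]
    exact (measurableSet_singleton_binseq _).inter
      (MeasurableSet.iInter fun m => MeasurableSet.iInter fun _ =>
        (measurableSet_singleton_binseq _).compl)
  have hEdisj : ∀ n m, n ≠ m → Disjoint (E n) (E m) := by
    intro n m hnm
    rw [Set.disjoint_left]
    rintro x ⟨hx1, hx2⟩ ⟨hy1, hy2⟩
    rcases lt_or_gt_of_ne hnm with h | h
    · exact hy2 n h (hx1 ▸ rfl) 
    · exact hx2 m h (hy1 ▸ rfl)
  have hEunion : (⋃ n, E n) = dD P r := by
    apply Set.Subset.antisymm
    · intro x hx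
      obtain ⟨n, hn⟩ := Set.mem_iUnion.1 hx
      rw [he]
      exact ⟨n, (hEsub n hn).symm⟩
    · intro x hx
      rw [he] at hx
      obtain ⟨n, hn⟩ := hx
      have hex : ∃ n, x = e n := ⟨n, hn.symm⟩
      refine Set.mem_iUnion.2 ⟨Nat.find hex, Nat.find_spec hex, ?_⟩
      intro m hm hxm
      exact absurd hxm (by
        intro h'
        exact Nat.find_min hex hm h')
  have hEzero : ∀ n, (qFA A q hfull).m (E n) = 0 := by
    intro n
    have h1 : q.m (E n) ≤ q.m {e n} :=
      q.toAlg.m_mono (q_mem_all q hfull _) (q_mem_all q hfull _) (hEsub n)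
    have h2 : q.m {e n} = 0 := by
      apply q_singleton_zero q hfull
      apply dD_nonatom P r
      rw [he]
      exact ⟨n, rfl⟩
    have h3 : 0 ≤ q.m (E n) := q.hnonneg _ (q_mem_all q hfull _)
    show q.m (E n) = 0
    linarith
  have htendsto := hCA E (fun n => hO _ (hEmeas n)) hEdisj
  have hzero : (fun N => ∑ n ∈ Finset.range N, (qFA A q hfull).m (E n)) = fun _ => 0 := by
    funext N
    rw [Finset.sum_congr rfl (fun n _ => hEzero n), Finset.sum_const, smul_zero]
  rw [hzero] at htendsto
  have huniq := tendsto_nhds_unique htendsto tendsto_const_nhds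
  have hval : (qFA A q hfull).m (⋃ n, E n) = 1 := by
    show q.m _ = 1
    rw [hEunion]
    exact q.hD.2
  rw [hval] at huniq
  exact one_ne_zero huniq

end NotCA
end BD
open MeasureTheory in
/-- Theorem 10: for every σ-additive probability `P` on the Borel
σ-algebra of `{0,1}^∞` that is positive on cylinders, there are at least continuum many
finitely additive probabilities agreeing with `P` on every cylinder, satisfying the
Blackwell–Dubins property, and failing σ-additivity. -/
theorem continuum_many_nonSigmaAdditive_BD
    (A : SetAlgebra BinSeq) (hσ : A.IsSigmaAlgebra)
    (hborel : ∀ S : Set BinSeq, MeasurableSet S → S ∈ A.sets)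
    (P : Measure BinSeq) [IsProbabilityMeasure P]
    (hpos : ∀ (ω : BinSeq) (t : ℕ), 0 < P (cyl ω t)) :
    Cardinal.continuum ≤ Cardinal.mk
      {Q : FA A // (∀ (ω : BinSeq) (t : ℕ), Q.m (cyl ω t) = (P (cyl ω t)).toReal) ∧
        BDProp Q ∧ ¬ CountablyAdditive Q} := by
  classical
  have hex : ∀ r : BinSeq, ∃ qq : BD.Piece P (BD.dD P r), qq.c = Set.univ :=
    fun r => BD.exists_full_piece P (BD.dD P r) (BD.dD_dense P r)
  choose qp hfp using hex
  have hprop : ∀ r : BinSeq,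
      (∀ (ω : BinSeq) (t : ℕ),
        (BD.qFA A (qp r) (hfp r)).m (cyl ω t) = (P (cyl ω t)).toReal)
      ∧ BDProp (BD.qFA A (qp r) (hfp r))
      ∧ ¬ CountablyAdditive (BD.qFA A (qp r) (hfp r)) := by
    intro r
    refine ⟨?_, BD.bd_of_full (qp r) (hfp r) hborel hpos,
      BD.not_countablyAdditive hborel r (qp r) (hfp r)⟩
    intro ω t
    show (qp r).m (cyl ω t) = _
    rw [BD.cyl_eq_cylV ω t, BD.q_cylV (qp r) (hfp r), BD.pr, ← BD.cyl_eq_cylV]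
  set f : BinSeq → {Q : FA A //
      (∀ (ω : BinSeq) (t : ℕ), Q.m (cyl ω t) = (P (cyl ω t)).toReal) ∧
        BDProp Q ∧ ¬ CountablyAdditive Q} :=
    fun r => ⟨BD.qFA A (qp r) (hfp r), hprop r⟩ with hfdef
  have hinj : Function.Injective f := by
    intro r r' hrr
    by_contra hne
    have hval : (BD.qFA A (qp r) (hfp r)).m (BD.dD P r)
        = (BD.qFA A (qp r') (hfp r')).m (BD.dD P r) := by
      have := congrArg (fun X => X.val.m (BD.dD P r)) hrr
      exact this
    have h1 : (qp r).m (BD.dD P r) = 1 := (qp r).hD.2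
    have hc0 : (qp r').m ((BD.dD P r')ᶜ) = 0 := by
      have hadd := (qp r').hadd _ (BD.q_mem_all (qp r') (hfp r') _) _
        (BD.q_mem_all (qp r') (hfp r') ((BD.dD P r')ᶜ)) disjoint_compl_right
      rw [Set.union_compl_self] at hadd
      have ht := (qp r').htotal
      have hD := (qp r').hD.2
      linarith
    have hsub : BD.dD P r ⊆ (BD.dD P r')ᶜ :=
      fun x hx hx' => BD.dD_disjoint P hne x hx hx'
    have h2 : (qp r').m (BD.dD P r) ≤ 0 := by
      rw [← hc0]
      exact (qp r').toAlg.m_mono (BD.q_mem_all (qp r') (hfp r') _)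
        (BD.q_mem_all (qp r') (hfp r') _) hsub
    have h1' : (BD.qFA A (qp r) (hfp r)).m (BD.dD P r) = 1 := h1
    have h2' : (BD.qFA A (qp r') (hfp r')).m (BD.dD P r) ≤ 0 := h2
    rw [h1'] at hval
    linarith [hval ▸ h2']
  have hmk : Cardinal.mk BinSeq = Cardinal.continuum := by
    rw [show (Cardinal.mk BinSeq) = 2 ^ Cardinal.aleph0 from
      (by rw [← Cardinal.mk_nat, ← Cardinal.mk_bool, Cardinal.power_def]),
      Cardinal.two_power_aleph0]
  calc Cardinal.continuum = Cardinal.mk BinSeq := hmk.symm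
    _ ≤ _ := Cardinal.mk_le_of_injective hinj
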